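/- arXiv:2008.13302 — 7 statements merged into one kernel-verified Lean document; each statement's English description precedes it below -/
import Mathlib

section
/- There exist constants c_1, c_2 > 0 and an integer K such that for every integer k ≥ K: if a finite connected graph of metric dimension at most k contains the n-dimensional hypercube Q_n as a subgraph, then n ≤ c_2 · k · log k, and there exists a finite connected graph of metric dimension at most k containing Q_n as a subgraph with n ≥ c_1 · k · log k. That is, the maximum n for which a graph of metric dimension at most k contains Q_n as a subgraph is Θ(k log k). -/
open SimpleGraph

/-- `S` is a resolving set for `G`: any two distinct vertices are distinguished
by their graph distance to some landmark in `S`. -/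
def IsResolvingSet {V : Type*} (G : SimpleGraph V) (S : Set V) : Prop :=
  ∀ u v : V, u ≠ v → ∃ w ∈ S, G.dist u w ≠ G.dist v w

/-- The metric dimension of `G`: the least size of a (finite) resolving set. -/
noncomputable def metricDim {V : Type*} (G : SimpleGraph V) : ℕ :=
  sInf {k | ∃ S : Finset V, IsResolvingSet G ↑S ∧ S.card = k}

/-- Distance from an edge `e = {u,v}` to a vertex `w`: `min (d(u,w)) (d(v,w))`. -/
noncomputable def edgeDist {V : Type*} (G : SimpleGraph V) (e : Sym2 V) (w : V) : ℕ :=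
  Sym2.lift ⟨fun u v => min (G.dist u w) (G.dist v w), fun u v => by simp [min_comm]⟩ e

/-- `S` is an edge resolving set for `G`: any two distinct edges are distinguished
by their distance to some landmark in `S`. -/
def IsEdgeResolvingSet {V : Type*} (G : SimpleGraph V) (S : Set V) : Prop :=
  ∀ e ∈ G.edgeSet, ∀ f ∈ G.edgeSet, e ≠ f → ∃ w ∈ S, edgeDist G e w ≠ edgeDist G f w

/-- The edge metric dimension of `G`: the least size of a (finite) edge resolving set. -/
noncomputable def edgeMetricDim {V : Type*} (G : SimpleGraph V) : ℕ :=
  sInf {k | ∃ S : Finset V, IsEdgeResolvingSet G ↑S ∧ S.card = k}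

/-- `G` contains `H` as a subgraph: there is an injective graph homomorphism `H → G`. -/
def Contains {V W : Type*} (G : SimpleGraph V) (H : SimpleGraph W) : Prop :=
  ∃ f : H →g G, Function.Injective f

/-- The graph `D_k` on `ℤ_{≥0}^k`: distinct points are adjacent iff they differ
by at most 1 in every coordinate. -/
def Dgraph (k : ℕ) : SimpleGraph (Fin k → ℕ) where
  Adj x y := x ≠ y ∧ ∀ i, x i ≤ y i + 1 ∧ y i ≤ x i + 1
  symm := ⟨fun _x _y h => ⟨h.1.symm, fun i => ⟨(h.2 i).2, (h.2 i).1⟩⟩⟩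
  loopless := ⟨fun _x h => h.1 rfl⟩

/-- The `n`-dimensional hypercube `Q_n` on vertex set `{0,1}^n`: two vertices are
adjacent iff they differ in exactly one coordinate. -/
def hypercubeGraph (n : ℕ) : SimpleGraph (Fin n → Fin 2) where
  Adj x y := ∃! i, x i ≠ y i
  symm := by
    constructor
    rintro x y ⟨i, hi, hu⟩
    exact ⟨i, hi.symm, fun j hj => hu j hj.symm⟩
  loopless := by
    constructor
    rintro x ⟨i, hi, _⟩
    exact hi rfl

open Finset Real

variable {n : ℕ}

/-- Hamming distance -/
def hamm (u v : Fin n → Fin 2) : ℕ := (Finset.univ.filter fun i => u i ≠ v i).card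

lemma hamm_eq_zero {u v : Fin n → Fin 2} (h : hamm u v = 0) : u = v := by
  classical
  funext i
  by_contra hne
  have hmem : i ∈ Finset.univ.filter fun i => u i ≠ v i := by simp [hne]
  unfold hamm at h
  rw [Finset.card_eq_zero] at h
  rw [h] at hmem
  exact absurd hmem (Finset.notMem_empty i)

lemma hamm_le (u v : Fin n → Fin 2) : hamm u v ≤ n := by
  classical
  calc (Finset.univ.filter fun i => u i ≠ v i).card ≤ (Finset.univ : Finset (Fin n)).card :=
        Finset.card_le_card (Finset.filter_subset _ _)
    _ = n := by simp

lemma hamm_triangle (u x v : Fin n → Fin 2) : hamm u v ≤ hamm u x + hamm x v := by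
  classical
  have hsub : (Finset.univ.filter fun i => u i ≠ v i) ⊆
      (Finset.univ.filter fun i => u i ≠ x i) ∪ (Finset.univ.filter fun i => x i ≠ v i) := by
    intro i hi
    simp only [Finset.mem_filter, Finset.mem_univ, true_and] at hi
    simp only [Finset.mem_union, Finset.mem_filter, Finset.mem_univ, true_and]
    by_contra hc
    push_neg at hc
    exact hi (hc.1.trans hc.2)
  calc _ ≤ _ := Finset.card_le_card hsub
    _ ≤ _ := Finset.card_union_le _ _

lemma exists_walk_hamm (u v : Fin n → Fin 2) :
    ∃ p : (hypercubeGraph n).Walk u v, p.length = hamm u v := by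
  classical
  generalize hd : hamm u v = d
  induction d generalizing u with
  | zero =>
    obtain rfl := hamm_eq_zero hd
    exact ⟨SimpleGraph.Walk.nil, by simp⟩
  | succ d ih =>
    have hne : u ≠ v := by
      intro h
      have h0 : hamm u v = 0 := by rw [h]; simp [hamm]
      omega
    have : ∃ i, u i ≠ v i := by
      by_contra hc; push_neg at hc; exact hne (funext hc)
    obtain ⟨i, hi⟩ := this
    have hadj : (hypercubeGraph n).Adj u (Function.update u i (v i)) := by
      refine ⟨i, ?_, ?_⟩
      · show u i ≠ Function.update u i (v i) i
        rw [Function.update_self]; exact hi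
      · intro j hj
        by_contra hji
        have : u j ≠ Function.update u i (v i) j := hj
        rw [Function.update_of_ne hji] at this
        exact this rfl
    have hham' : hamm (Function.update u i (v i)) v = d := by
      have hset : (Finset.univ.filter fun j => Function.update u i (v i) j ≠ v j) =
          (Finset.univ.filter fun j => u j ≠ v j).erase i := by
        ext j
        simp only [Finset.mem_filter, Finset.mem_univ, true_and, Finset.mem_erase]
        constructor
        · intro hj
          have hji : j ≠ i := by
            intro h; subst h; rw [Function.update_self] at hj; exact hj rfl
          rw [Function.update_of_ne hji] at hj
          exact ⟨hji, hj⟩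
        · rintro ⟨hji, hj⟩
          rw [Function.update_of_ne hji]; exact hj
      have hmem : i ∈ Finset.univ.filter fun j => u j ≠ v j := by simp [hi]
      have hcard := Finset.card_erase_of_mem hmem
      unfold hamm
      rw [hset, hcard]
      unfold hamm at hd
      omega
    obtain ⟨p, hp⟩ := ih _ hham'
    exact ⟨SimpleGraph.Walk.cons hadj p, by simp [hp]⟩

lemma hypercube_preconnected : (hypercubeGraph n).Preconnected := by
  intro u v
  obtain ⟨p, _⟩ := exists_walk_hamm u v
  exact p.reachable

lemma hypercube_connected : (hypercubeGraph n).Connected :=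
  (SimpleGraph.connected_iff _).mpr ⟨hypercube_preconnected, ⟨fun _ => 0⟩⟩

lemma hamm_le_length {u v : Fin n → Fin 2} (p : (hypercubeGraph n).Walk u v) :
    hamm u v ≤ p.length := by
  classical
  induction p with
  | nil => simp [hamm]
  | @cons a b c h q ih =>
    have h1 : hamm a b = 1 := by
      obtain ⟨i, hi, hu⟩ := h
      have hset : (Finset.univ.filter fun j => a j ≠ b j) = {i} := by
        ext j
        simp only [Finset.mem_filter, Finset.mem_univ, true_and, Finset.mem_singleton]
        exact ⟨fun hj => hu j hj, fun hj => hj ▸ hi⟩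
      simp [hamm, hset]
    calc hamm a c ≤ hamm a b + hamm b c := hamm_triangle _ _ _
      _ ≤ 1 + q.length := by rw [h1]; omega
      _ = (SimpleGraph.Walk.cons h q).length := by simp [add_comm]

lemma hypercube_dist (u v : Fin n → Fin 2) : (hypercubeGraph n).dist u v = hamm u v := by
  refine le_antisymm ?_ ?_
  · obtain ⟨p, hp⟩ := exists_walk_hamm u v
    exact hp ▸ SimpleGraph.dist_le p
  · obtain ⟨p, hp⟩ := (hypercube_preconnected u v).exists_walk_length_eq_dist
    exact hp ▸ hamm_le_length p

lemma dist_map_le {V : Type*} {G : SimpleGraph V} (f : hypercubeGraph n →g G)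
    (u v : Fin n → Fin 2) : G.dist (f u) (f v) ≤ hamm u v := by
  obtain ⟨p, hp⟩ := exists_walk_hamm u v
  calc G.dist (f u) (f v) ≤ (p.map f).length := SimpleGraph.dist_le _
    _ = hamm u v := by simp [hp]

lemma log_two_ge : (1:ℝ)/2 ≤ Real.log 2 := by
  rw [Real.le_log_iff_exp_le (by norm_num : (0:ℝ) < 2)]
  have h1 : Real.exp (1/2) * Real.exp (1/2) = Real.exp 1 := by
    rw [← Real.exp_add]; norm_num
  have h2 : Real.exp 1 < 2.7182818286 := Real.exp_one_lt_d9
  nlinarith [Real.exp_pos (1/2 : ℝ)]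

lemma log_three_ge : (1:ℝ) ≤ Real.log 3 := by
  rw [Real.le_log_iff_exp_le (by norm_num : (0:ℝ) < 3)]
  have h2 : Real.exp 1 < 2.7182818286 := Real.exp_one_lt_d9
  linarith

lemma ub_arith {n k : ℕ} (hk : 3 ≤ k) (h : 2 ^ n ≤ (2 * n + 1) ^ k) :
    (n : ℝ) ≤ 300 * k * Real.log k := by
  have hk1 : (1:ℝ) ≤ k := by exact_mod_cast Nat.one_le_of_lt hk
  have hlogk : (1:ℝ) ≤ Real.log k := by
    calc (1:ℝ) ≤ Real.log 3 := log_three_ge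
      _ ≤ Real.log k := Real.log_le_log (by norm_num) (by exact_mod_cast hk)
  rcases Nat.eq_zero_or_pos n with rfl | hn
  · simp only [Nat.cast_zero]
    positivity
  · have hn1 : (1:ℝ) ≤ n := by exact_mod_cast hn
    -- logs of the main inequality
    have hcast : ((2:ℝ)) ^ n ≤ ((2 * n + 1 : ℝ)) ^ k := by
      have := h
      push_cast at this ⊢
      exact_mod_cast h
    have hlog : (n:ℝ) * Real.log 2 ≤ (k:ℝ) * Real.log (2 * n + 1) := by
      have h1 : Real.log ((2:ℝ) ^ n) ≤ Real.log ((2 * (n:ℝ) + 1) ^ k) :=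
        Real.log_le_log (by positivity) hcast
      rwa [Real.log_pow, Real.log_pow] at h1
    -- Step 1 : log (2n+1) ≤ 4 √n
    have hs : (0:ℝ) ≤ (n:ℝ) := by positivity
    have hsqrt_sq : Real.sqrt n * Real.sqrt n = (n:ℝ) := Real.mul_self_sqrt hs
    have hA : Real.log (2 * (n:ℝ) + 1) ≤ 4 * Real.sqrt n := by
      have h31 : Real.log (2 * (n:ℝ) + 1) ≤ Real.log (3 * n) :=
        Real.log_le_log (by positivity) (by linarith)
      have h32 : Real.log (3 * (n:ℝ)) = 2 * Real.log (Real.sqrt (3 * n)) := by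
        rw [Real.log_sqrt (by positivity)]; ring
      have h33 : Real.log (Real.sqrt (3 * (n:ℝ))) ≤ Real.sqrt (3 * n) - 1 :=
        Real.log_le_sub_one_of_pos (Real.sqrt_pos.mpr (by positivity))
      have h34 : Real.sqrt (3 * (n:ℝ)) ≤ 2 * Real.sqrt n := by
        have : (3 * (n:ℝ)) ≤ (2 * Real.sqrt n) ^ 2 := by nlinarith
        calc Real.sqrt (3 * (n:ℝ)) ≤ Real.sqrt ((2 * Real.sqrt n)^2) :=
              Real.sqrt_le_sqrt this
          _ = 2 * Real.sqrt n := Real.sqrt_sq (by positivity)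
      linarith
    -- deduce n ≤ 64 k^2
    have hsn : Real.sqrt n ≤ 8 * k := by
      have h41 : (n:ℝ) * Real.log 2 ≤ (k:ℝ) * (4 * Real.sqrt n) := by
        calc (n:ℝ) * Real.log 2 ≤ (k:ℝ) * Real.log (2*n+1) := hlog
          _ ≤ (k:ℝ) * (4 * Real.sqrt n) := by
              apply mul_le_mul_of_nonneg_left hA (by positivity)
      nlinarith [log_two_ge, Real.sqrt_nonneg (n:ℝ)]
    have hnk2 : (n:ℝ) ≤ 64 * k^2 := by nlinarith [Real.sqrt_nonneg (n:ℝ)]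
    -- Step 2 : log (2n+1) ≤ 131 log k
    have hB : Real.log (2 * (n:ℝ) + 1) ≤ 131 * Real.log k := by
      have h51 : (2 * (n:ℝ) + 1) ≤ 129 * (k:ℝ)^3 := by nlinarith
      have h52 : Real.log (2 * (n:ℝ) + 1) ≤ Real.log (129 * (k:ℝ)^3) :=
        Real.log_le_log (by positivity) h51
      have h53 : Real.log (129 * (k:ℝ)^3) = Real.log 129 + 3 * Real.log k := by
        rw [Real.log_mul (by norm_num) (by positivity), Real.log_pow]
        push_cast; ring
      have h54 : Real.log (129:ℝ) ≤ 128 := by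
        have := Real.log_le_sub_one_of_pos (by norm_num : (0:ℝ) < 129)
        linarith
      nlinarith
    have hfinal : (n:ℝ) * Real.log 2 ≤ (k:ℝ) * (131 * Real.log k) :=
      hlog.trans (mul_le_mul_of_nonneg_left hB (by positivity))
    nlinarith [log_two_ge, mul_nonneg (le_trans zero_le_one hk1)
      (le_trans zero_le_one hlogk)]

lemma ub_count {n : ℕ} {V : Type} [Fintype V] (G : SimpleGraph V) (hc : G.Connected)
    (S : Finset V) (hS : IsResolvingSet G ↑S) (f : hypercubeGraph n →g G)
    (hf : Function.Injective f) : 2 ^ n ≤ (2 * n + 1) ^ S.card := by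
  classical
  set x₀ : Fin n → Fin 2 := fun _ => 0 with hx₀
  have hdist : ∀ x : Fin n → Fin 2, ∀ w : V,
      (G.dist (f x) w : ℤ) - G.dist (f x₀) w ∈ Finset.Icc (-(n:ℤ)) n := by
    intro x w
    have h1 : G.dist (f x) w ≤ G.dist (f x) (f x₀) + G.dist (f x₀) w := hc.dist_triangle
    have h2 : G.dist (f x₀) w ≤ G.dist (f x₀) (f x) + G.dist (f x) w := hc.dist_triangle
    have h3 : G.dist (f x) (f x₀) ≤ n := (dist_map_le f x x₀).trans (hamm_le _ _)
    have h4 : G.dist (f x₀) (f x) ≤ n := (dist_map_le f x₀ x).trans (hamm_le _ _)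
    simp only [Finset.mem_Icc]
    omega
  set Ψ : (Fin n → Fin 2) → (↥S → ↥(Finset.Icc (-(n:ℤ)) n)) :=
    fun x w => ⟨(G.dist (f x) w : ℤ) - G.dist (f x₀) w, hdist x w⟩ with hΨ
  have hinj : Function.Injective Ψ := by
    intro x y hxy
    by_contra hne
    have hfx : f x ≠ f y := fun h => hne (hf h)
    obtain ⟨w, hw, hwd⟩ := hS (f x) (f y) hfx
    have := congrFun hxy ⟨w, hw⟩
    simp only [hΨ, Subtype.mk_eq_mk, sub_left_inj] at this
    exact hwd (by exact_mod_cast this)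
  have hcard := Fintype.card_le_of_injective Ψ hinj
  have hsrc : Fintype.card (Fin n → Fin 2) = 2 ^ n := by simp
  have hicc : Fintype.card ↥(Finset.Icc (-(n:ℤ)) n) = 2 * n + 1 := by
    rw [Fintype.card_coe, Int.card_Icc]
    omega
  have htgt : Fintype.card (↥S → ↥(Finset.Icc (-(n:ℤ)) n)) = (2 * n + 1) ^ S.card := by
    rw [Fintype.card_fun, hicc, Fintype.card_coe]
  rw [hsrc, htgt] at hcard
  exact hcard

lemma central_binom_sq (m : ℕ) : (2*m+1) * (Nat.choose (2*m) m)^2 ≤ 16^m := by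
  induction m with
  | zero => simp
  | succ m ih =>
    set a := Nat.choose (2*m) m with ha
    set b := Nat.choose (2*(m+1)) (m+1) with hb
    have hA : (2*m+1) * a = Nat.choose (2*m+1) (m+1) * (m+1) := by
      simpa using Nat.add_one_mul_choose_eq (2*m) m
    have hB : (2*m+2) * Nat.choose (2*m+1) m = b * (m+1) := by
      have := Nat.add_one_mul_choose_eq (2*m+1) m
      simpa [hb, show 2*(m+1) = 2*m+1+1 by ring] using this
    have hS : Nat.choose (2*m+1) (m+1) = Nat.choose (2*m+1) m := Nat.choose_symm_half m
    have h3 : (m+1)^2 * b = (2*m+2) * ((2*m+1) * a) := by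
      calc (m+1)^2 * b = (m+1) * (b * (m+1)) := by ring
        _ = (m+1) * ((2*m+2) * Nat.choose (2*m+1) m) := by rw [hB]
        _ = (2*m+2) * ((m+1) * Nat.choose (2*m+1) m) := by ring
        _ = (2*m+2) * (Nat.choose (2*m+1) (m+1) * (m+1)) := by rw [hS]; ring
        _ = (2*m+2) * ((2*m+1) * a) := by rw [← hA]
    have key : (m+1)^4 * ((2*(m+1)+1) * b^2) ≤ (m+1)^4 * 16^(m+1) := by
      have e : (m+1)^4 * ((2*(m+1)+1) * b^2) = (2*m+3) * ((m+1)^2*b)^2 := by ring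
      rw [e, h3]
      calc (2*m+3) * ((2*m+2) * ((2*m+1)*a))^2
          = ((2*m+3)*(2*m+1)*(2*m+2)^2) * ((2*m+1)*a^2) := by ring
        _ ≤ ((2*m+3)*(2*m+1)*(2*m+2)^2) * 16^m := Nat.mul_le_mul_left _ ih
        _ ≤ (16*(m+1)^4) * 16^m := Nat.mul_le_mul_right _ (by nlinarith)
        _ = (m+1)^4 * 16^(m+1) := by ring
    exact Nat.le_of_mul_le_mul_left key (by positivity)

lemma central_binom_half (m : ℕ) (hm : 1 ≤ m) : Nat.choose (2*m) m ≤ 2^(2*m-1) := by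
  rcases Nat.lt_or_ge m 2 with h | h
  · interval_cases m
    · decide
  · have h1 := central_binom_sq m
    set C := Nat.choose (2*m) m with hC
    have h2 : 4 * C^2 ≤ 16^m := le_trans (by nlinarith) h1
    have h4 : 16^m = 4 * (2^(2*m-1))^2 := by
      have : 16^m = 2^(4*m) := by
        rw [show (16:ℕ) = 2^4 by norm_num, ← pow_mul]
      rw [this, ← pow_mul]
      have : 2*(2*m-1) + 2 = 4*m := by omega
      rw [show (4:ℕ) = 2^2 by norm_num, ← pow_add]
      congr 1
      omega
    by_contra hcon
    push_neg at hcon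
    have h6 : (2^(2*m-1)+1)^2 ≤ C^2 := Nat.pow_le_pow_left hcon 2
    have h5 : 4*C^2 ≤ 4*(2^(2*m-1))^2 := by rw [← h4]; exact h2
    nlinarith [h5, h6, Nat.zero_le (2^(2*m-1))]

def rval (b : Bool) : ℤ := if b then 1 else -1

def zval : Fin 3 → ℤ := ![0, 1, -1]

def rowSum (r : Fin n → Bool) (z : Fin n → Fin 3) : ℤ :=
  ∑ j, rval (r j) * zval (z j)

def zsupp (z : Fin n → Fin 3) : Finset (Fin n) := Finset.univ.filter fun j => z j ≠ 0

def badRows (z : Fin n → Fin 3) : Finset (Fin n → Bool) :=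
  Finset.univ.filter fun r => rowSum r z = 0

lemma zval_ne_zero {a : Fin 3} (h : a ≠ 0) : zval a = 1 ∨ zval a = -1 := by
  fin_cases a
  · exact absurd rfl h
  · left; rfl
  · right; rfl

lemma rval_cases (b : Bool) : rval b = 1 ∨ rval b = -1 := by
  cases b <;> simp [rval]

/-- the set where the product is 1 -/
def posSet (r : Fin n → Bool) (z : Fin n → Fin 3) : Finset (Fin n) :=
  (zsupp z).filter fun j => rval (r j) * zval (z j) = 1

lemma rowSum_eq (r : Fin n → Bool) (z : Fin n → Fin 3) :
    rowSum r z = 2 * (posSet r z).card - (zsupp z).card := by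
  classical
  have h1 : rowSum r z = ∑ j ∈ zsupp z, rval (r j) * zval (z j) := by
    rw [rowSum, ← Finset.sum_filter_ne_zero]
    congr 1
    ext j
    simp only [zsupp, Finset.mem_filter, Finset.mem_univ, true_and]
    constructor
    · intro h hz
      exact h (by simp [hz, zval])
    · intro h hz
      rcases zval_ne_zero h with h' | h' <;> rcases rval_cases (r j) with h'' | h'' <;>
        rw [h', h''] at hz <;> norm_num at hz
  have h2 : ∀ j ∈ zsupp z, rval (r j) * zval (z j) = if j ∈ posSet r z then 1 else -1 := by
    intro j hj
    by_cases hp : j ∈ posSet r z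
    · simp only [hp, if_true]
      exact (Finset.mem_filter.mp hp).2
    · simp only [hp, if_false]
      have hz : z j ≠ 0 := (Finset.mem_filter.mp hj).2
      rcases zval_ne_zero hz with h' | h' <;> rcases rval_cases (r j) with h'' | h'' <;>
        rw [h', h''] <;> norm_num
      all_goals
        exfalso; apply hp; exact Finset.mem_filter.mpr ⟨hj, by rw [h', h'']; norm_num⟩
  rw [h1, Finset.sum_congr rfl h2]
  have h3 : ∀ x ∈ zsupp z, (if x ∈ posSet r z then (1:ℤ) else -1) =
      (if x ∈ posSet r z then (2:ℤ) else 0) - 1 := by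
    intro x _; split <;> ring
  rw [Finset.sum_congr rfl h3, Finset.sum_sub_distrib, Finset.sum_ite_mem]
  have hsub : posSet r z ⊆ zsupp z := Finset.filter_subset _ _
  rw [Finset.inter_eq_right.mpr hsub, Finset.sum_const, Finset.sum_const]
  push_cast
  ring

example : True := trivial

lemma fin3_cases {a : Fin 3} (h : a ≠ 0) : a = 1 ∨ a = 2 := by
  have h3 := a.isLt
  have h0 : a.val ≠ 0 := fun hh => h (Fin.ext hh)
  rcases Nat.lt_or_ge a.val 2 with hv | hv
  · left; apply Fin.ext; simp; omega
  · right; apply Fin.ext; simp; omega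

lemma term_eq_one_iff (r : Fin n → Bool) (z : Fin n → Fin 3) (j : Fin n) (hj : z j ≠ 0) :
    rval (r j) * zval (z j) = 1 ↔ r j = decide (z j = 1) := by
  rcases fin3_cases hj with h | h <;> rw [h] <;> cases hb : r j <;>
    simp [rval, zval]

example : True := trivial

lemma fiber_card (z : Fin n → Fin 3) (A : Finset (Fin n)) (hA : A ⊆ zsupp z) :
    (Finset.univ.filter fun r : Fin n → Bool => posSet r z = A).card
      = 2 ^ (n - (zsupp z).card) := by
  classical
  set ρ : Fin n → Bool := fun j => if j ∈ A then decide (z j = 1) else !(decide (z j = 1))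
    with hρ
  have hset : (Finset.univ.filter fun r : Fin n → Bool => posSet r z = A)
      = Fintype.piFinset (fun j => if j ∈ zsupp z then ({ρ j} : Finset Bool) else Finset.univ) := by
    ext r
    simp only [Finset.mem_filter, Finset.mem_univ, true_and, Fintype.mem_piFinset]
    constructor
    · intro hps j
      by_cases hj : j ∈ zsupp z
      · simp only [hj, if_true, Finset.mem_singleton]
        have hzj : z j ≠ 0 := (Finset.mem_filter.mp hj).2
        by_cases hjA : j ∈ A
        · have : j ∈ posSet r z := hps ▸ hjA
          have h1 := (Finset.mem_filter.mp this).2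
          rw [term_eq_one_iff r z j hzj] at h1
          rw [hρ]; simp only [hjA, if_true]; exact h1
        · have : j ∉ posSet r z := fun hc => hjA (hps ▸ hc)
          have h1 : ¬ (rval (r j) * zval (z j) = 1) := fun hc =>
            this (Finset.mem_filter.mpr ⟨hj, hc⟩)
          rw [term_eq_one_iff r z j hzj] at h1
          rw [hρ]; simp only [hjA, if_false]
          cases hb : r j <;> cases hd : decide (z j = 1) <;> simp_all
      · simp [hj]
    · intro hr
      ext j
      simp only [posSet, Finset.mem_filter]
      constructor
      · rintro ⟨hj, hterm⟩
        have hzj : z j ≠ 0 := (Finset.mem_filter.mp hj).2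
        rw [term_eq_one_iff r z j hzj] at hterm
        have := hr j
        simp only [hj, if_true, Finset.mem_singleton] at this
        rw [hρ] at this
        by_contra hjA
        simp only [hjA, if_false] at this
        rw [this] at hterm
        simp at hterm
      · intro hjA
        have hj : j ∈ zsupp z := hA hjA
        have hzj : z j ≠ 0 := (Finset.mem_filter.mp hj).2
        refine ⟨hj, ?_⟩
        rw [term_eq_one_iff r z j hzj]
        have := hr j
        simp only [hj, if_true, Finset.mem_singleton] at this
        rw [hρ] at this
        simp only [hjA, if_true] at this
        exact this
  rw [hset, Fintype.card_piFinset]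
  have : ∀ j, (if j ∈ zsupp z then ({ρ j} : Finset Bool) else Finset.univ).card
      = if j ∈ zsupp z then 1 else 2 := by
    intro j; split <;> simp
  rw [Finset.prod_congr rfl (fun j _ => this j), Finset.prod_ite]
  simp only [Finset.prod_const_one, Finset.prod_const, one_mul]
  congr 1
  have : Finset.univ.filter (fun j => ¬ j ∈ zsupp z) = (zsupp z)ᶜ := by
    ext j; simp
  rw [this, Finset.card_compl]
  simp

lemma badRows_card_even (z : Fin n → Fin 3) (m : ℕ) (hs : (zsupp z).card = 2*m) :
    (badRows z).card = Nat.choose (2*m) m * 2 ^ (n - 2*m) := by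
  classical
  have hmem : ∀ r ∈ badRows z, posSet r z ∈ (zsupp z).powersetCard m := by
    intro r hr
    rw [Finset.mem_powersetCard]
    refine ⟨Finset.filter_subset _ _, ?_⟩
    have h0 : rowSum r z = 0 := (Finset.mem_filter.mp hr).2
    rw [rowSum_eq] at h0
    rw [hs] at h0
    have : 2 * ((posSet r z).card : ℤ) = 2*m := by omega
    exact_mod_cast (by omega : ((posSet r z).card : ℤ) = m)
  rw [Finset.card_eq_sum_card_fiberwise hmem]
  have hfib : ∀ A ∈ (zsupp z).powersetCard m,
      ((badRows z).filter fun r => posSet r z = A).card = 2 ^ (n - 2*m) := by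
    intro A hA
    rw [Finset.mem_powersetCard] at hA
    have heq : (badRows z).filter (fun r => posSet r z = A)
        = Finset.univ.filter fun r : Fin n → Bool => posSet r z = A := by
      ext r
      simp only [Finset.mem_filter, badRows, Finset.mem_univ, true_and]
      constructor
      · rintro ⟨_, h⟩; exact h
      · intro h
        refine ⟨?_, h⟩
        rw [rowSum_eq, h, hA.2, hs]
        push_cast
        ring
    rw [heq, fiber_card z A hA.1, hs]
  rw [Finset.sum_congr rfl hfib, Finset.sum_const, Finset.card_powersetCard, hs, smul_eq_mul]

lemma badRows_card_odd (z : Fin n → Fin 3) (hs : (zsupp z).card % 2 = 1) :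
    (badRows z).card = 0 := by
  classical
  rw [Finset.card_eq_zero]
  ext r
  simp only [badRows, Finset.mem_filter, Finset.mem_univ, true_and, Finset.notMem_empty,
    iff_false]
  intro h0
  rw [rowSum_eq] at h0
  omega

lemma badRows_sq (z : Fin n → Fin 3) (h : 1 ≤ (zsupp z).card) :
    (zsupp z).card * (badRows z).card ^ 2 ≤ 4 ^ n := by
  rcases Nat.even_or_odd (zsupp z).card with ⟨m, hm⟩ | ⟨m, hm⟩
  · have hs : (zsupp z).card = 2*m := by omega
    have hmn : 2*m ≤ n := by
      rw [← hs]
      calc (zsupp z).card ≤ (Finset.univ : Finset (Fin n)).card :=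
        Finset.card_le_card (Finset.filter_subset _ _)
      _ = n := by simp
    rw [badRows_card_even z m hs, hs]
    have h1 : 2*m * (Nat.choose (2*m) m * 2^(n-2*m))^2
        = (2*m * Nat.choose (2*m) m ^2) * (2^(n-2*m))^2 := by ring
    rw [h1]
    calc (2*m * Nat.choose (2*m) m ^2) * (2^(n-2*m))^2 ≤ 16^m * (2^(n-2*m))^2 :=
          Nat.mul_le_mul_right _ (by
            calc 2*m * Nat.choose (2*m) m ^2 ≤ (2*m+1) * Nat.choose (2*m) m ^2 :=
                  Nat.mul_le_mul_right _ (by omega)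
              _ ≤ 16^m := central_binom_sq m)
      _ = 4^n := by
          rw [show (16:ℕ) = 4^2 by norm_num, show (2:ℕ)^(n-2*m) = 2^(n-2*m) from rfl]
          rw [← pow_mul, ← pow_mul, show (4:ℕ) = 2^2 by norm_num, ← pow_mul, ← pow_mul,
            ← pow_add]
          congr 1
          omega
  · have hs : (zsupp z).card % 2 = 1 := by omega
    rw [badRows_card_odd z hs]
    simp

lemma badRows_half (z : Fin n → Fin 3) (h : 1 ≤ (zsupp z).card) :
    2 * (badRows z).card ≤ 2 ^ n := by
  rcases Nat.even_or_odd (zsupp z).card with ⟨m, hm⟩ | ⟨m, hm⟩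
  · have hs : (zsupp z).card = 2*m := by omega
    have hm1 : 1 ≤ m := by omega
    have hmn : 2*m ≤ n := by
      rw [← hs]
      calc (zsupp z).card ≤ (Finset.univ : Finset (Fin n)).card :=
        Finset.card_le_card (Finset.filter_subset _ _)
      _ = n := by simp
    rw [badRows_card_even z m hs]
    calc 2 * (Nat.choose (2*m) m * 2^(n-2*m)) ≤ 2 * (2^(2*m-1) * 2^(n-2*m)) :=
          Nat.mul_le_mul_left _ (Nat.mul_le_mul_right _ (central_binom_half m hm1))
      _ = 2^n := by
          rw [← pow_add, ← pow_succ']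
          congr 1
          omega
  · have hs : (zsupp z).card % 2 = 1 := by omega
    rw [badRows_card_odd z hs]
    simp

lemma zsupp_pos {z : Fin n → Fin 3} (hz : z ≠ (fun _ => 0)) : 1 ≤ (zsupp z).card := by
  have : ∃ j, z j ≠ 0 := by
    by_contra hc
    push_neg at hc
    exact hz (funext hc)
  obtain ⟨j, hj⟩ := this
  have : j ∈ zsupp z := by simp [zsupp, hj]
  exact Finset.card_pos.mpr ⟨j, this⟩

lemma count_small (t : ℕ) (hn : 1 ≤ n) (ht1 : 1 ≤ t) (htn : t ≤ n) :
    ((Finset.univ.filter fun z : Fin n → Fin 3 => z ≠ (fun _ => 0) ∧ (zsupp z).card ≤ t)).card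
      ≤ (3*n)^(t+1) := by
  classical
  set S := (Finset.univ.filter fun z : Fin n → Fin 3 =>
    z ≠ (fun _ => 0) ∧ (zsupp z).card ≤ t) with hS
  set T := (Finset.range (t+1)).biUnion
    (fun s => Finset.powersetCard s (Finset.univ : Finset (Fin n))) with hT
  have hmem : ∀ z ∈ S, zsupp z ∈ T := by
    intro z hz
    rw [hS, Finset.mem_filter] at hz
    rw [hT, Finset.mem_biUnion]
    exact ⟨(zsupp z).card, Finset.mem_range.mpr (by omega),
      Finset.mem_powersetCard.mpr ⟨Finset.subset_univ _, rfl⟩⟩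
  rw [Finset.card_eq_sum_card_fiberwise hmem]
  have hfib : ∀ A ∈ T, (S.filter fun z => zsupp z = A).card ≤ 2^t := by
    intro A hA
    have hAcard : A.card ≤ t := by
      rw [hT, Finset.mem_biUnion] at hA
      obtain ⟨s, hs, hsA⟩ := hA
      rw [Finset.mem_powersetCard] at hsA
      rw [Finset.mem_range] at hs
      omega
    have hsub : (S.filter fun z => zsupp z = A) ⊆
        Fintype.piFinset (fun j => if j ∈ A then ({1, 2} : Finset (Fin 3)) else {0}) := by
      intro z hz
      rw [Finset.mem_filter] at hz
      obtain ⟨_, hzA⟩ := hz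
      rw [Fintype.mem_piFinset]
      intro j
      by_cases hj : j ∈ A
      · simp only [hj, if_true, Finset.mem_insert, Finset.mem_singleton]
        have : j ∈ zsupp z := hzA ▸ hj
        exact fin3_cases (Finset.mem_filter.mp this).2
      · simp only [hj, if_false, Finset.mem_singleton]
        by_contra hc
        exact hj (hzA ▸ (by simp [zsupp, hc] : j ∈ zsupp z))
    calc (S.filter fun z => zsupp z = A).card
        ≤ (Fintype.piFinset (fun j => if j ∈ A then ({1, 2} : Finset (Fin 3)) else {0})).card :=
          Finset.card_le_card hsub
      _ = ∏ j, (if j ∈ A then ({1, 2} : Finset (Fin 3)) else {0}).card :=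
          Fintype.card_piFinset _
      _ = ∏ j, (if j ∈ A then 2 else 1) := by
          apply Finset.prod_congr rfl
          intro j _
          split <;> simp
      _ ≤ 2^t := by
          rw [Finset.prod_ite]
          simp only [Finset.prod_const, Finset.prod_const_one, mul_one]
          have hAA : Finset.filter (fun j => j ∈ A) Finset.univ = A := by
            ext j; simp
          rw [hAA, one_pow, mul_one]
          exact Nat.pow_le_pow_right (show 0 < 2 by norm_num) hAcard
  calc ∑ A ∈ T, (S.filter fun z => zsupp z = A).card ≤ ∑ _A ∈ T, 2^t :=
        Finset.sum_le_sum hfib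
    _ = T.card * 2^t := by rw [Finset.sum_const, smul_eq_mul]
    _ ≤ ((t+1) * n^t) * 2^t := by
        apply Nat.mul_le_mul_right
        calc T.card ≤ ∑ s ∈ Finset.range (t+1), (Finset.powersetCard s
              (Finset.univ : Finset (Fin n))).card := Finset.card_biUnion_le
          _ = ∑ s ∈ Finset.range (t+1), Nat.choose n s := by
              apply Finset.sum_congr rfl
              intro s _
              rw [Finset.card_powersetCard, Finset.card_univ, Fintype.card_fin]
          _ ≤ ∑ _s ∈ Finset.range (t+1), n^t := by
              apply Finset.sum_le_sum
              intro s hs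
              calc Nat.choose n s ≤ n^s := Nat.choose_le_pow n s
                _ ≤ n^t := Nat.pow_le_pow_right hn (by rw [Finset.mem_range] at hs; omega)
          _ = (t+1) * n^t := by rw [Finset.sum_const, Finset.card_range, smul_eq_mul]
    _ ≤ (3*n) * (3*n)^t := by
        have h1 : (t+1) ≤ 3*n := by omega
        have h2 : n^t * 2^t = (2*n)^t := by rw [mul_pow]; ring_nf
        calc (t+1) * n^t * 2^t = (t+1) * (n^t * 2^t) := by ring
          _ = (t+1) * (2*n)^t := by rw [h2]
          _ ≤ (3*n) * (3*n)^t := Nat.mul_le_mul h1 (Nat.pow_le_pow_left (by omega) t)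
    _ = (3*n)^(t+1) := by rw [← pow_succ']

lemma detecting_exists {n k2 t : ℕ} (hn : 1 ≤ n) (ht1 : 1 ≤ t) (htn : t ≤ n) (hk2 : 1 ≤ k2)
    (hC1 : 4 * (3*n)^(t+1) ≤ 2^(2*k2))
    (hC2 : 4 * 3^n ≤ t^k2) :
    ∃ E : Fin (2*k2) → Fin n → Bool,
      ∀ z : Fin n → Fin 3, z ≠ (fun _ => 0) → ∃ i, rowSum (E i) z ≠ 0 := by
  classical
  set k := 2*k2 with hk
  have hk1 : 1 ≤ k := by omega
  set Zb : Finset (Fin n → Fin 3) := Finset.univ.filter (fun z => z ≠ fun _ => 0) with hZb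
  set badM : (Fin n → Fin 3) → Finset (Fin k → Fin n → Bool) :=
    fun z => Finset.univ.filter (fun E => ∀ i, rowSum (E i) z = 0) with hbadM
  have hcardBadM : ∀ z, (badM z).card = (badRows z).card ^ k := by
    intro z
    have : badM z = Fintype.piFinset (fun _ : Fin k => badRows z) := by
      ext E
      simp [hbadM, badRows, Fintype.mem_piFinset]
    rw [this, Fintype.card_piFinset]
    simp
  -- the key counting bound
  have hnonzero : ∀ z ∈ Zb, 1 ≤ (zsupp z).card := by
    intro z hz
    rw [hZb, Finset.mem_filter] at hz
    exact zsupp_pos hz.2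
  have hsum : ∑ z ∈ Zb, (badRows z).card ^ k < 2^(n*k) := by
    have hsplit := Finset.sum_filter_add_sum_filter_not Zb
      (fun z => (zsupp z).card ≤ t) (fun z => (badRows z).card ^ k)
    -- small part
    have hsmall : 4 * ∑ z ∈ Zb.filter (fun z => (zsupp z).card ≤ t),
        (badRows z).card ^ k ≤ 2^(n*k) := by
      have hterm : ∀ z ∈ Zb.filter (fun z => (zsupp z).card ≤ t),
          (badRows z).card ^ k ≤ (2^(n-1))^k := by
        intro z hz
        apply Nat.pow_le_pow_left
        have h1 := badRows_half z (hnonzero z (Finset.mem_filter.mp hz).1)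
        have h2 : 2^n = 2 * 2^(n-1) := by
          rw [← pow_succ']
          congr 1
          omega
        omega
      have hcount : (Zb.filter (fun z => (zsupp z).card ≤ t)).card ≤ (3*n)^(t+1) := by
        have : Zb.filter (fun z => (zsupp z).card ≤ t) =
            Finset.univ.filter fun z : Fin n → Fin 3 =>
              z ≠ (fun _ => 0) ∧ (zsupp z).card ≤ t := by
          rw [hZb, Finset.filter_filter]
        rw [this]
        exact count_small t hn ht1 htn
      calc 4 * ∑ z ∈ Zb.filter (fun z => (zsupp z).card ≤ t), (badRows z).card ^ k
          ≤ 4 * ∑ _z ∈ Zb.filter (fun z => (zsupp z).card ≤ t), (2^(n-1))^k :=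
            Nat.mul_le_mul_left _ (Finset.sum_le_sum hterm)
        _ = 4 * ((Zb.filter (fun z => (zsupp z).card ≤ t)).card * (2^(n-1))^k) := by
            rw [Finset.sum_const, smul_eq_mul]
        _ ≤ 4 * ((3*n)^(t+1) * (2^(n-1))^k) :=
            Nat.mul_le_mul_left _ (Nat.mul_le_mul_right _ hcount)
        _ = (4 * (3*n)^(t+1)) * (2^(n-1))^k := by ring
        _ ≤ 2^k * (2^(n-1))^k := Nat.mul_le_mul_right _ hC1
        _ = 2^(k + (n-1)*k) := by rw [← pow_mul, ← pow_add]
        _ = 2^(n*k) := by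
            congr 1
            have : 1 ≤ n := hn
            cases n with
            | zero => omega
            | succ m => simp only [Nat.add_sub_cancel]; ring
    -- large part
    have hlarge : 4 * ∑ z ∈ Zb.filter (fun z => ¬ (zsupp z).card ≤ t),
        (badRows z).card ^ k ≤ 2^(n*k) := by
      set L := Zb.filter (fun z => ¬ (zsupp z).card ≤ t) with hL
      have hterm : ∀ z ∈ L, t^k2 * ((badRows z).card ^ k) ≤ 2^(n*k) := by
        intro z hz
        rw [hL, Finset.mem_filter] at hz
        have hst : t ≤ (zsupp z).card := by omega
        have hsq := badRows_sq z (hnonzero z hz.1)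
        have h1 : t * (badRows z).card ^ 2 ≤ 4^n :=
          le_trans (Nat.mul_le_mul_right _ hst) hsq
        have hck : (badRows z).card ^ k = ((badRows z).card^2)^k2 := by
          rw [hk, pow_mul]
        calc t^k2 * ((badRows z).card ^ k)
            = (t * (badRows z).card ^ 2)^k2 := by rw [hck, ← mul_pow]
          _ ≤ (4^n)^k2 := Nat.pow_le_pow_left h1 k2
          _ = 2^(n*k) := by
              rw [show (4:ℕ) = 2^2 by norm_num, ← pow_mul, ← pow_mul]
              congr 1
              rw [hk]; ring
      have hsum1 : t^k2 * ∑ z ∈ L, (badRows z).card ^ k ≤ 3^n * 2^(n*k) := by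
        rw [Finset.mul_sum]
        calc ∑ z ∈ L, t^k2 * (badRows z).card ^ k ≤ ∑ _z ∈ L, 2^(n*k) :=
              Finset.sum_le_sum hterm
          _ = L.card * 2^(n*k) := by rw [Finset.sum_const, smul_eq_mul]
          _ ≤ 3^n * 2^(n*k) := by
              apply Nat.mul_le_mul_right
              calc L.card ≤ Fintype.card (Fin n → Fin 3) := by
                    apply Finset.card_le_card (Finset.subset_univ L) |>.trans
                    simp
                _ = 3^n := by simp
      have h4 : 3^n * (4 * ∑ z ∈ L, (badRows z).card ^ k) ≤ 3^n * 2^(n*k) := by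
        calc 3^n * (4 * ∑ z ∈ L, (badRows z).card ^ k)
            = (4 * 3^n) * ∑ z ∈ L, (badRows z).card ^ k := by ring
          _ ≤ t^k2 * ∑ z ∈ L, (badRows z).card ^ k :=
              Nat.mul_le_mul_right _ hC2
          _ ≤ 3^n * 2^(n*k) := hsum1
      exact Nat.le_of_mul_le_mul_left h4 (pow_pos (by norm_num) n)
    have hP : 0 < 2^(n*k) := pow_pos (by norm_num) _
    have e2 : ∑ z ∈ Zb.filter (fun z => (zsupp z).card ≤ t), (badRows z).card ^ k
        + ∑ z ∈ Zb.filter (fun z => ¬ (zsupp z).card ≤ t), (badRows z).card ^ k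
        = ∑ z ∈ Zb, (badRows z).card ^ k := hsplit
    omega
  -- conclude
  have hcardU : Fintype.card (Fin k → Fin n → Bool) = 2^(n*k) := by
    have h1 : Fintype.card (Fin k → Fin n → Bool) = (2^n)^k := by
      rw [Fintype.card_fun]
      congr 1 <;> simp
    rw [h1, ← pow_mul, mul_comm]
  have hbiUnion : (Zb.biUnion badM).card < Fintype.card (Fin k → Fin n → Bool) := by
    calc (Zb.biUnion badM).card ≤ ∑ z ∈ Zb, (badM z).card := Finset.card_biUnion_le
      _ = ∑ z ∈ Zb, (badRows z).card ^ k := Finset.sum_congr rfl (fun z _ => hcardBadM z)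
      _ < 2^(n*k) := hsum
      _ = Fintype.card (Fin k → Fin n → Bool) := hcardU.symm
  have hex : ∃ E : Fin k → Fin n → Bool, E ∉ Zb.biUnion badM := by
    by_contra hcon
    push_neg at hcon
    have hsub : (Finset.univ : Finset (Fin k → Fin n → Bool)) ⊆ Zb.biUnion badM :=
      fun E _ => hcon E
    have := Finset.card_le_card hsub
    rw [Finset.card_univ] at this
    omega
  obtain ⟨E, hE⟩ := hex
  refine ⟨E, fun z hz => ?_⟩
  have hzZb : z ∈ Zb := by rw [hZb, Finset.mem_filter]; exact ⟨Finset.mem_univ _, hz⟩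
  have hnotbad : E ∉ badM z := fun hc => hE (Finset.mem_biUnion.mpr ⟨z, hzZb, hc⟩)
  rw [hbadM] at hnotbad
  simp only [Finset.mem_filter, Finset.mem_univ, true_and] at hnotbad
  push_neg at hnotbad
  exact hnotbad

lemma pow4_le_two_pow {m : ℕ} (hm : 20 ≤ m) : m^4 ≤ 2^m := by
  induction m, hm using Nat.le_induction with
  | base => norm_num
  | succ m hm ih =>
    have a1 : 20 * m^3 ≤ m^4 := by
      calc 20 * m^3 ≤ m * m^3 := Nat.mul_le_mul_right _ hm
        _ = m^4 := by ring
    have a2 : 20 * m^2 ≤ m^3 := by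
      calc 20 * m^2 ≤ m * m^2 := Nat.mul_le_mul_right _ hm
        _ = m^3 := by ring
    have a3 : 20 * m ≤ m^2 := by
      calc 20 * m ≤ m * m := Nat.mul_le_mul_right _ hm
        _ = m^2 := by ring
    have h1 : (m+1)^4 ≤ 2 * m^4 := by nlinarith [a1, a2, a3, hm]
    calc (m+1)^4 ≤ 2 * m^4 := h1
      _ ≤ 2 * 2^m := Nat.mul_le_mul_left _ ih
      _ = 2^(m+1) := by rw [pow_succ]; ring

lemma sq_le_two_pow_half {m : ℕ} (hm : 20 ≤ m) : m^2 ≤ 2^(m/2 + 1) := by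
  have h1 : (m^2)^2 ≤ (2^(m/2+1))^2 := by
    calc (m^2)^2 = m^4 := by ring
      _ ≤ 2^m := pow4_le_two_pow hm
      _ ≤ 2^(2*(m/2+1)) := Nat.pow_le_pow_right (by norm_num) (by omega)
      _ = (2^(m/2+1))^2 := by rw [← pow_mul]; ring_nf
  exact (Nat.pow_le_pow_iff_left (by norm_num : 2 ≠ 0)).mp h1

/-- parameter arithmetic : all hypotheses needed for `detecting_exists`
    plus the real lower bound on `n`. -/
lemma params (k : ℕ) (hk : 2^100 ≤ k) :
    ∃ n k2 t : ℕ,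
      1 ≤ n ∧ 1 ≤ t ∧ t ≤ n ∧ 1 ≤ k2 ∧ 2*k2 ≤ k ∧
      4 * (3*n)^(t+1) ≤ 2^(2*k2) ∧
      4 * 3^n ≤ t^k2 ∧
      (1/1000 : ℝ) * k * Real.log k ≤ (n : ℝ) := by
  have hk0 : k ≠ 0 := by omega
  set L := Nat.log 2 k with hLdef
  have hL100 : 100 ≤ L := (Nat.le_log_iff_pow_le (by norm_num) hk0).mpr hk
  have hkL : 2^L ≤ k := Nat.pow_log_le_self 2 hk0
  have hkU : k < 2^(L+1) := Nat.lt_pow_succ_log_self (by norm_num) k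
  set k2 := k / 2 with hk2def
  set d := L / 8 with hddef
  set t := 2^d with htdef
  set n := k * L / 200 with hndef
  have hd12 : 12 ≤ d := by omega
  have hk2big : 2^99 ≤ k2 := by
    have : 2^100 ≤ k := hk
    omega
  have hk2_1 : 1 ≤ k2 := by omega
  have h2k2 : 2*k2 ≤ k := by omega
  -- n is large: 2^(L-1) ≤ n
  have hnlower : 2^(L-1) ≤ n := by
    have h1 : 100 * 2^L ≤ k * L := by
      calc 100 * 2^L ≤ L * k := Nat.mul_le_mul (by omega) hkL
        _ = k * L := by ring
    have h2 : 100 * 2^L / 200 ≤ n := by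
      rw [hndef]
      exact Nat.div_le_div_right h1
    have h4 : 2^L = 2 * 2^(L-1) := by
      rw [← pow_succ']
      congr 1
      omega
    omega
  have hn1 : 1 ≤ n := le_trans (Nat.one_le_two_pow) hnlower
  have htn : t ≤ n := by
    calc t = 2^d := rfl
      _ ≤ 2^(L-1) := Nat.pow_le_pow_right (by norm_num) (by omega)
      _ ≤ n := hnlower
  -- upper bound on n : n ≤ k^2, for the log bound
  have hnk2 : n ≤ k * k := by
    calc n ≤ k * L := Nat.div_le_self _ _ |>.trans (Nat.le_refl _)
      _ ≤ k * k := Nat.mul_le_mul_left _ (Nat.log_le_self 2 k)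
  -- hC2
  have hC2 : 4 * 3^n ≤ t^k2 := by
    have hdk2 : 2*n + 2 ≤ d * k2 := by
      have a1 : 200 * n ≤ k * L := by
        rw [hndef, mul_comm]
        exact Nat.div_mul_le_self (k*L) 200
      have a2 : k * L ≤ (2*k2+1) * (8*d+7) := Nat.mul_le_mul (by omega) (by omega)
      have a3 : (2*k2+1) * (8*d+7) = 16*(d*k2) + 14*k2 + 8*d + 7 := by ring
      have q1 : d*1 ≤ d*k2 := Nat.mul_le_mul_left _ hk2_1
      have q2 : 1*k2 ≤ d*k2 := Nat.mul_le_mul_right _ (by omega)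
      have q3 : 12*3 ≤ d*k2 := Nat.mul_le_mul hd12 (by omega)
      linarith
    calc 4 * 3^n ≤ 4 * 4^n := Nat.mul_le_mul_left _ (Nat.pow_le_pow_left (by norm_num) n)
      _ = 4^(n+1) := by rw [pow_succ]; ring
      _ = 2^(2*(n+1)) := by rw [show (4:ℕ) = 2^2 by norm_num, ← pow_mul]
      _ ≤ 2^(d*k2) := Nat.pow_le_pow_right (by norm_num) (by omega)
      _ = t^k2 := by rw [htdef, ← pow_mul]
  -- hC1
  have hC1 : 4 * (3*n)^(t+1) ≤ 2^(2*k2) := by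
    set L2 := Nat.log 2 n with hL2def
    have hb1 : n < 2^(L2+1) := Nat.lt_pow_succ_log_self (by norm_num) n
    have hb2 : 3*n ≤ 2^(L2+3) := by
      have : 2^(L2+3) = 8 * 2^L2 := by rw [pow_add]; ring
      have h2L2 : 2^L2 ≤ n := Nat.pow_log_le_self 2 (by omega)
      omega
    have hL2b : L2 + 3 ≤ 3*L := by
      have : n < 2^(2*L+2) := by
        calc n ≤ k*k := hnk2
          _ < 2^(L+1) * 2^(L+1) := by
              apply Nat.mul_lt_mul_of_lt_of_le hkU (le_of_lt hkU)
              positivity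
          _ = 2^(2*L+2) := by rw [← pow_add]; ring_nf
      have := Nat.log_lt_of_lt_pow (by omega : n ≠ 0) this
      omega
    have hexp : (L2+3)*(t+1) + 2 ≤ 2*k2 := by
      have b1 : (L2+3)*(t+1) ≤ (3*L) * 2^(d+1) := by
        apply Nat.mul_le_mul hL2b
        rw [htdef]
        have h1 : (2:ℕ)^(d+1) = 2^d + 2^d := by rw [pow_succ]; ring
        have h2 : 1 ≤ (2:ℕ)^d := Nat.one_le_two_pow
        omega
      have b2 : 3*L ≤ 2^(L/2+1) := by
        calc 3*L ≤ L*L := Nat.mul_le_mul_right L (by omega)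
          _ = L^2 := (sq L).symm
          _ ≤ 2^(L/2+1) := sq_le_two_pow_half (by omega)
      have b3 : (3*L) * 2^(d+1) ≤ 2^(L/2+1) * 2^(d+1) := Nat.mul_le_mul_right _ b2
      have b4 : (2:ℕ)^(L/2+1) * 2^(d+1) = 2^(L/2+d+2) := by rw [← pow_add]; ring_nf
      have b5 : (2:ℕ)^(L/2+d+2) + 2 ≤ 2^(L/2+d+3) := by
        have : (2:ℕ)^(L/2+d+3) = 2 * 2^(L/2+d+2) := by rw [pow_succ]; ring
        have h1 : 2 ≤ 2^(L/2+d+2) := by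
          calc 2 = 2^1 := rfl
            _ ≤ 2^(L/2+d+2) := Nat.pow_le_pow_right (by norm_num) (by omega)
        omega
      have b6 : (2:ℕ)^(L/2+d+3) ≤ 2^(L-1) := Nat.pow_le_pow_right (by norm_num) (by omega)
      have b7 : 2^(L-1) ≤ 2*k2 := by
        have : (2:ℕ)^L = 2 * 2^(L-1) := by
          rw [← pow_succ']
          congr 1
          omega
        omega
      omega
    calc 4 * (3*n)^(t+1) ≤ 4 * (2^(L2+3))^(t+1) :=
          Nat.mul_le_mul_left _ (Nat.pow_le_pow_left hb2 _)
      _ = 2^((L2+3)*(t+1) + 2) := by rw [← pow_mul, pow_add]; ring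
      _ ≤ 2^(2*k2) := Nat.pow_le_pow_right (by norm_num) hexp
  -- real lower bound
  have hreal : (1/1000 : ℝ) * k * Real.log k ≤ (n : ℝ) := by
    have c1 : (k:ℝ) * L ≤ 200 * n + 199 := by
      have : k * L ≤ 200 * n + 199 := by
        have := hndef
        omega
      exact_mod_cast this
    have hlog2lt : Real.log 2 < 0.6931471808 := Real.log_two_lt_d9
    have hlog2gt : (0.6931471803:ℝ) < Real.log 2 := Real.log_two_gt_d9
    have c2 : Real.log k ≤ ((L:ℝ)+1) * 0.7 := by
      have h1 : (k:ℝ) ≤ 2^(L+1) := by exact_mod_cast le_of_lt hkU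
      have h2 : Real.log k ≤ Real.log (2^(L+1)) :=
        Real.log_le_log (by exact_mod_cast Nat.pos_of_ne_zero hk0) h1
      rw [Real.log_pow] at h2
      calc Real.log k ≤ (L+1) * Real.log 2 := by exact_mod_cast h2
        _ ≤ ((L:ℝ)+1) * 0.7 := by
            apply mul_le_mul_of_nonneg_left (by linarith) (by positivity)
    have c2' : (k:ℝ) * Real.log k ≤ (k:ℝ) * (((L:ℝ)+1) * 0.7) :=
      mul_le_mul_of_nonneg_left c2 (by positivity)
    have c3 : (60:ℝ) ≤ Real.log k := by
      have h1 : ((2:ℝ)^(100:ℕ)) ≤ (k:ℝ) := by exact_mod_cast hk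
      have h2 : Real.log (2^(100:ℕ)) ≤ Real.log k := Real.log_le_log (by positivity) h1
      rw [Real.log_pow] at h2
      push_cast at h2
      have : (60:ℝ) ≤ 100 * Real.log 2 := by linarith
      linarith
    have c5 : (60:ℝ) * k ≤ (k:ℝ) * Real.log k := by
      have := mul_le_mul_of_nonneg_left c3 (show (0:ℝ) ≤ k by positivity)
      linarith
    have c4 : (1000000:ℝ) ≤ (k:ℝ) := by
      have : (1000000:ℕ) ≤ k := le_trans (by norm_num) hk
      exact_mod_cast this
    linarith [c1, c2', c5, c4]
  exact ⟨n, k2, t, hn1, Nat.one_le_two_pow, htn, hk2_1, h2k2, hC1, hC2, hreal⟩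

lemma fin2_cases (a : Fin 2) : a = 0 ∨ a = 1 := by omega

lemma hamm_sum {n : ℕ} (u w : Fin n → Fin 2) :
    (hamm u w : ℤ) = ∑ j, (if u j ≠ w j then (1:ℤ) else 0) := by
  classical
  rw [hamm, Finset.card_filter]
  push_cast
  rfl

lemma hypercube_resolving {n k' : ℕ} (E : Fin k' → Fin n → Bool)
    (hdet : ∀ z : Fin n → Fin 3, z ≠ (fun _ => 0) → ∃ i, rowSum (E i) z ≠ 0) :
    ∃ S : Finset (Fin n → Fin 2),
      IsResolvingSet (hypercubeGraph n) ↑S ∧ S.card ≤ k' := by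
  classical
  set c : Fin k' → (Fin n → Fin 2) := fun i j => if E i j then 0 else 1 with hc
  refine ⟨Finset.image c Finset.univ, ?_, le_trans Finset.card_image_le (by simp)⟩
  intro u v huv
  set z : Fin n → Fin 3 := fun j => if u j = v j then 0 else if u j = 1 then 1 else 2 with hz
  have hz0 : z ≠ (fun _ => 0) := by
    intro hcon
    apply huv
    funext j
    by_contra hne
    have : z j = 0 := congrFun hcon j
    rw [hz] at this
    simp only [hne, if_false] at this
    split at this <;> simp_all
  obtain ⟨i, hi⟩ := hdet z hz0
  refine ⟨c i, by simp, ?_⟩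
  rw [hypercube_dist, hypercube_dist]
  intro heq
  apply hi
  have hcast : (hamm u (c i) : ℤ) = (hamm v (c i) : ℤ) := by exact_mod_cast heq
  rw [hamm_sum, hamm_sum] at hcast
  have hkey : ∑ j, ((if u j ≠ c i j then (1:ℤ) else 0) - (if v j ≠ c i j then (1:ℤ) else 0))
      = rowSum (E i) z := by
    rw [rowSum]
    apply Finset.sum_congr rfl
    intro j _
    rcases fin2_cases (u j) with hu | hu <;> rcases fin2_cases (v j) with hv | hv <;>
      cases hE : E i j <;>
      simp [hz, hc, hu, hv, hE, rval, zval]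
  rw [Finset.sum_sub_distrib] at hkey
  rw [← hkey, hcast]
  ring


lemma univ_resolving {V : Type} [Fintype V] (G : SimpleGraph V) (hc : G.Connected) :
    IsResolvingSet G ↑(Finset.univ : Finset V) := by
  intro u v huv
  refine ⟨u, by simp, ?_⟩
  rw [SimpleGraph.dist_self]
  have := hc.pos_dist_of_ne (Ne.symm huv)
  omega

/-- the maximum `n` such that some finite connected graph of metric
dimension at most `k` contains the hypercube `Q_n` as a subgraph is `Θ(k log k)`. -/
theorem statement12 :
    ∃ (c₁ c₂ : ℝ), 0 < c₁ ∧ 0 < c₂ ∧ ∃ K : ℕ, ∀ k : ℕ, K ≤ k →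
      (∀ (V : Type) [Fintype V], ∀ G : SimpleGraph V, G.Connected → metricDim G ≤ k →
        ∀ n : ℕ, Contains G (hypercubeGraph n) → (n : ℝ) ≤ c₂ * k * Real.log k) ∧
      (∃ (V : Type) (_ : Fintype V) (G : SimpleGraph V), G.Connected ∧ metricDim G ≤ k ∧
        ∃ n : ℕ, c₁ * k * Real.log k ≤ (n : ℝ) ∧ Contains G (hypercubeGraph n)) := by
  refine ⟨1/1000, 300, by norm_num, by norm_num, 2^100, fun k hk => ⟨?_, ?_⟩⟩
  · -- upper bound
    intro V _ G hconn hdim n hcont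
    obtain ⟨f, hf⟩ := hcont
    have hne : {m | ∃ S : Finset V, IsResolvingSet G ↑S ∧ S.card = m}.Nonempty :=
      ⟨(Finset.univ : Finset V).card, Finset.univ, univ_resolving G hconn, rfl⟩
    have hmem := Nat.sInf_mem hne
    obtain ⟨S, hSres, hScard⟩ := hmem
    have h1 : 2 ^ n ≤ (2 * n + 1) ^ S.card := ub_count G hconn S hSres f hf
    have h2 : (2 * n + 1) ^ S.card ≤ (2 * n + 1) ^ k := by
      apply Nat.pow_le_pow_right (by omega)
      calc S.card = metricDim G := hScard
        _ ≤ k := hdim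
    have hk3 : 3 ≤ k := le_trans (by norm_num) hk
    exact ub_arith hk3 (h1.trans h2)
  · -- lower bound
    obtain ⟨n, k2, t, hn1, ht1, htn, hk2, h2k2, hC1, hC2, hreal⟩ := params k hk
    obtain ⟨E, hE⟩ := detecting_exists hn1 ht1 htn hk2 hC1 hC2
    obtain ⟨S, hSres, hScard⟩ := hypercube_resolving E hE
    refine ⟨Fin n → Fin 2, inferInstance, hypercubeGraph n, hypercube_connected, ?_, n,
      hreal, ⟨SimpleGraph.Hom.id, fun _ _ h => h⟩⟩
    calc metricDim (hypercubeGraph n) ≤ S.card := Nat.sInf_le ⟨S, hSres, rfl⟩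
      _ ≤ 2 * k2 := hScard
      _ ≤ k := h2k2
end

section
/- If a finite connected graph G of metric dimension at most k contains the n-dimensional hypercube Q_n as a subgraph, then 2^n ≤ (n+1)^k. -/
open SimpleGraph

/-- if a finite connected graph of metric dimension at most `k`
contains `Q_n` as a subgraph then `2^n ≤ (n+1)^k`. -/
theorem statement13 {V : Type*} [Fintype V] (G : SimpleGraph V) (hG : G.Connected)
    (k n : ℕ) (hdim : metricDim G ≤ k) (hcont : Contains G (hypercubeGraph n)) :
    2 ^ n ≤ (n + 1) ^ k := by
  classical
  obtain ⟨f, hf⟩ := hcont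
  -- extract a resolving set of size metricDim G
  have hne : {k | ∃ S : Finset V, IsResolvingSet G ↑S ∧ S.card = k}.Nonempty := by
    refine ⟨(Finset.univ : Finset V).card, Finset.univ, ?_, rfl⟩
    intro u v huv
    refine ⟨u, by simp, ?_⟩
    rw [SimpleGraph.dist_self]
    intro h
    exact huv (hG.dist_eq_zero_iff.mp h.symm).symm
  obtain ⟨S, hS, hcard⟩ := Nat.sInf_mem hne
  have hSk : S.card ≤ k := hcard.symm ▸ hdim
  -- the image of any two hypercube vertices are at distance ≤ n in G
  have key : ∀ x y : Fin n → Fin 2, G.dist (f x) (f y) ≤ n := by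
    have main : ∀ (s : Finset (Fin n)) (x y : Fin n → Fin 2),
        (∀ i, x i ≠ y i → i ∈ s) → G.dist (f x) (f y) ≤ s.card := by
      intro s
      induction s using Finset.induction_on with
      | empty =>
        intro x y h
        have : x = y := funext fun i => by
          by_contra hne; exact absurd (h i hne) (Finset.notMem_empty i)
        simp [this]
      | @insert a s ha ih =>
        intro x y h
        set y' : Fin n → Fin 2 := Function.update y a (x a) with hy'
        have h' : ∀ i, x i ≠ y' i → i ∈ s := by
          intro i hi
          by_cases hia : i = a
          · subst hia; simp [hy', Function.update_self] at hi
          · rw [hy', Function.update_of_ne hia] at hi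
            rcases Finset.mem_insert.mp (h i hi) with h1 | h1
            · exact absurd h1 hia
            · exact h1
        have h1 : G.dist (f x) (f y') ≤ s.card := ih x y' h'
        by_cases hxa : x a = y a
        · have : y' = y := by
            funext i
            by_cases hia : i = a
            · subst hia; simp [hy', Function.update_self, hxa]
            · rw [hy', Function.update_of_ne hia]
          rw [this] at h1
          calc G.dist (f x) (f y) ≤ s.card := h1
            _ ≤ (insert a s).card := Finset.card_le_card (Finset.subset_insert a s)
        · have hadj : (hypercubeGraph n).Adj y' y := by
            refine ⟨a, ?_, ?_⟩
            · simp [hy', Function.update_self]; exact hxa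
            · intro j hj
              by_contra hja
              rw [hy', Function.update_of_ne hja] at hj
              exact hj rfl
          have hadjG : G.Adj (f y') (f y) := f.map_adj hadj
          have h2 : G.dist (f y') (f y) ≤ 1 := by
            have := SimpleGraph.dist_le hadjG.toWalk
            simpa using this
          calc G.dist (f x) (f y) ≤ G.dist (f x) (f y') + G.dist (f y') (f y) :=
                hG.dist_triangle
            _ ≤ s.card + 1 := Nat.add_le_add h1 h2
            _ = (insert a s).card := by rw [Finset.card_insert_of_notMem ha]
    intro x y
    calc G.dist (f x) (f y) ≤ (Finset.univ : Finset (Fin n)).card :=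
          main Finset.univ x y (fun i _ => Finset.mem_univ i)
      _ = n := by simp
  -- the minimum over the cube of the distance to a landmark
  have hcne : (Finset.univ : Finset (Fin n → Fin 2)).Nonempty :=
    Finset.univ_nonempty
  set m : V → ℕ := fun w => Finset.univ.inf' hcne (fun x : Fin n → Fin 2 => G.dist (f x) w)
    with hm
  have hmle : ∀ (w : V) (x : Fin n → Fin 2), m w ≤ G.dist (f x) w := by
    intro w x
    exact Finset.inf'_le _ (Finset.mem_univ x)
  have hbound : ∀ (w : V) (x : Fin n → Fin 2), G.dist (f x) w - m w < n + 1 := by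
    intro w x
    obtain ⟨xm, _, hxm⟩ := Finset.exists_mem_eq_inf' hcne
      (fun x : Fin n → Fin 2 => G.dist (f x) w)
    have h1 : G.dist (f x) w ≤ G.dist (f x) (f xm) + G.dist (f xm) w := hG.dist_triangle
    have h2 : G.dist (f x) (f xm) ≤ n := key x xm
    have h3 : m w = G.dist (f xm) w := hxm
    omega
  -- the injective map from cube vertices to landmark distance vectors
  set F : (Fin n → Fin 2) → (↥S → Fin (n + 1)) :=
    fun x w => ⟨G.dist (f x) w - m w, hbound w x⟩ with hF
  have hFinj : Function.Injective F := by
    intro x y hxy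
    by_contra hne2
    have hfxy : f x ≠ f y := fun h => hne2 (hf h)
    obtain ⟨w, hwS, hw⟩ := hS (f x) (f y) hfxy
    have := congrFun hxy ⟨w, hwS⟩
    have hval : G.dist (f x) w - m w = G.dist (f y) w - m w := congrArg Fin.val this
    have h1 := hmle w x
    have h2 := hmle w y
    omega
  calc 2 ^ n = Fintype.card (Fin n → Fin 2) := by simp
    _ ≤ Fintype.card (↥S → Fin (n + 1)) := Fintype.card_le_of_injective F hFinj
    _ = (n + 1) ^ S.card := by simp [Fintype.card_fun]
    _ ≤ (n + 1) ^ k := Nat.pow_le_pow_right (Nat.succ_pos n) hSk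
end

section
/- Let G be a finite connected simple graph of order n, and suppose G has a vertex v of degree n − 1 − x such that every vertex of G is within graph distance 2 of v. Then the edge metric dimension of G satisfies edim(G) ≥ n − 1 − x − 2^x. -/
open SimpleGraph

/-- if a finite connected graph `G` of order `n` has a vertex `v` of
degree `n - 1 - x` within distance 2 of every vertex, then
`edim(G) ≥ n - 1 - x - 2^x`. -/
theorem statement14 {V : Type*} [Fintype V] (G : SimpleGraph V) (hG : G.Connected)
    (v : V) (x : ℕ) (hdeg : (G.neighborSet v).ncard + x + 1 = Fintype.card V)
    (hdist : ∀ u : V, G.dist v u ≤ 2) :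
    Fintype.card V - 1 - x - 2 ^ x ≤ edgeMetricDim G := by
  classical
  have hed : ∀ a b w : V, edgeDist G s(a,b) w = min (G.dist a w) (G.dist b w) := by
    intro a b w; rfl
  -- the full vertex set is an edge resolving set
  have huniv : IsEdgeResolvingSet G ((Finset.univ : Finset V) : Set V) := by
    intro e he f hf hef
    induction e using Sym2.inductionOn with
    | hf a b =>
    induction f using Sym2.inductionOn with
    | hf c d =>
    have hab : G.Adj a b := he
    have hcd : G.Adj c d := hf
    have hne : ¬((a = c ∧ b = d) ∨ (a = d ∧ b = c)) := by
      simpa [Sym2.eq_iff] using hef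
    have : ∃ w, (w = a ∨ w = b) ∧ w ≠ c ∧ w ≠ d := by
      by_cases h1 : a = c
      · refine ⟨b, Or.inr rfl, ?_, ?_⟩
        · rintro rfl; exact hab.ne h1
        · rintro rfl; exact hne (Or.inl ⟨h1, rfl⟩)
      by_cases h2 : a = d
      · refine ⟨b, Or.inr rfl, ?_, ?_⟩
        · rintro rfl; exact hne (Or.inr ⟨h2, rfl⟩)
        · rintro rfl; exact hab.ne h2
      · exact ⟨a, Or.inl rfl, h1, h2⟩
    obtain ⟨w, hw, hwc, hwd⟩ := this
    refine ⟨w, by simp, ?_⟩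
    have h0 : edgeDist G s(a,b) w = 0 := by
      rcases hw with rfl | rfl <;> simp [hed]
    have h1 : 0 < edgeDist G s(c,d) w := by
      rw [hed]
      exact lt_min (hG.pos_dist_of_ne (Ne.symm hwc)) (hG.pos_dist_of_ne (Ne.symm hwd))
    omega
  rw [edgeMetricDim]
  refine le_csInf ⟨Finset.univ.card, Finset.univ, huniv, rfl⟩ ?_
  rintro k ⟨S, hS, rfl⟩
  -- setup
  set N : Finset V := G.neighborFinset v with hN
  have hNcard : N.card + x + 1 = Fintype.card V := by
    rw [hN, neighborFinset_def, ← Set.ncard_eq_toFinset_card']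
    exact hdeg
  set T : Finset V := S.filter (fun w => w ≠ v ∧ ¬ G.Adj v w) with hT
  -- key injection
  have key : (N \ S).card ≤ 2 ^ T.card := by
    have : (N \ S).card ≤ Fintype.card (T → Bool) := by
      have hinj : Function.Injective
          (fun (u : ↥(N \ S)) (w : T) => decide (edgeDist G s(u.1, v) w.1 = 1)) := by
        rintro ⟨u, hu⟩ ⟨u', hu'⟩ heq
        simp only [Finset.mem_sdiff, hN, mem_neighborFinset] at hu hu'
        ext
        by_contra hne
        have hedges : s(u, v) ≠ s(u', v) := by
          intro h
          rw [Sym2.eq_iff] at h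
          rcases h with ⟨h1, _⟩ | ⟨h1, _⟩
          · exact hne h1
          · exact G.irrefl (h1 ▸ hu.1)
        obtain ⟨w, hwS, hwd⟩ := hS s(u,v) (G.mem_edgeSet.2 hu.1.symm) s(u',v)
          (G.mem_edgeSet.2 hu'.1.symm) hedges
        have hwS' : w ∈ S := hwS
        have huw : u ≠ w := fun h => hu.2 (h ▸ hwS')
        have hu'w : u' ≠ w := fun h => hu'.2 (h ▸ hwS')
        have hdu : 0 < G.dist u w := hG.pos_dist_of_ne huw
        have hdu' : 0 < G.dist u' w := hG.pos_dist_of_ne hu'w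
        -- w must be a "far" vertex
        have hwv : w ≠ v := by
          rintro rfl
          apply hwd
          simp [hed, SimpleGraph.dist_self]
        have hadj : ¬ G.Adj v w := by
          intro hvw
          have h1 : G.dist v w = 1 := SimpleGraph.dist_eq_one_iff_adj.mpr hvw
          apply hwd
          rw [hed, hed, h1]
          omega
        have hdvw : G.dist v w = 2 := by
          have h2 := hdist w
          have h0 : G.dist v w ≠ 0 := fun h => hwv (hG.dist_eq_zero_iff.1 h).symm
          have h1 : G.dist v w ≠ 1 := fun h => hadj (SimpleGraph.dist_eq_one_iff_adj.mp h)
          omega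
        have htri : G.dist u w ≤ 3 := by
          calc G.dist u w ≤ G.dist u v + G.dist v w := hG.dist_triangle
          _ ≤ 1 + 2 := by
              rw [hdvw]
              exact Nat.add_le_add_right (SimpleGraph.dist_eq_one_iff_adj.mpr hu.1.symm).le 2
          _ = 3 := rfl
        have htri' : G.dist u' w ≤ 3 := by
          calc G.dist u' w ≤ G.dist u' v + G.dist v w := hG.dist_triangle
          _ ≤ 1 + 2 := by
              rw [hdvw]
              exact Nat.add_le_add_right (SimpleGraph.dist_eq_one_iff_adj.mpr hu'.1.symm).le 2
          _ = 3 := rfl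
        have hwT : w ∈ T := by
          rw [hT, Finset.mem_filter]
          exact ⟨hwS', hwv, hadj⟩
        have := congrFun heq ⟨w, hwT⟩
        simp only [decide_eq_decide] at this
        rw [hed, hed, hdvw] at hwd this
        omega
      calc (N \ S).card = Fintype.card ↥(N \ S) := (Fintype.card_coe _).symm
      _ ≤ _ := Fintype.card_le_of_injective _ hinj
    simpa using this
  have hsplit : N.card ≤ S.card + (N \ S).card := by
    have h1 : (N \ S).card + (N ∩ S).card = N.card := Finset.card_sdiff_add_card_inter N S
    have h2 : (N ∩ S).card ≤ S.card := Finset.card_le_card Finset.inter_subset_right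
    omega
  have hTx : T.card ≤ x := by
    -- T consists of vertices ≠ v and not adjacent to v
    have : T.card + N.card + 1 ≤ Fintype.card V := by
      have hdisj : Disjoint T N := by
        rw [Finset.disjoint_left]
        intro a haT haN
        rw [hT, Finset.mem_filter] at haT
        rw [hN, mem_neighborFinset] at haN
        exact haT.2.2 haN
      have hins : (insert v (T ∪ N)).card ≤ Fintype.card V :=
        Finset.card_le_card (Finset.subset_univ _) |>.trans_eq (Finset.card_univ)
      have hvnot : v ∉ T ∪ N := by
        simp [hT, hN, Finset.mem_filter]
      rw [Finset.card_insert_of_notMem hvnot, Finset.card_union_of_disjoint hdisj] at hins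
      omega
    omega
  have hpow : 2 ^ T.card ≤ 2 ^ x := Nat.pow_le_pow_right (by norm_num) hTx
  omega
end

section
/- For every ε > 0 and every C > 0, there exists a finite connected simple graph G such that edim(G) ≥ C · 2^{dim(G)} and edim(G) ≥ (1 − ε) · |V(G)|. -/
open SimpleGraph

namespace St15

abbrev Vt (k : ℕ) : Type := (Fin k) ⊕ ((Fin k → Fin 3) ⊕ ((Fin k → Bool) ⊕ Unit))

variable {k : ℕ}

def va (i : Fin k) : Vt k := Sum.inl i
def vb (v : Fin k → Fin 3) : Vt k := Sum.inr (Sum.inl v)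
def vx (T : Fin k → Bool) : Vt k := Sum.inr (Sum.inr (Sum.inl T))
def vg : Vt k := Sum.inr (Sum.inr (Sum.inr ()))

def cls (v : Fin k → Fin 3) : Fin k → Bool := fun i => decide (v i = 2)

def rel : Vt k → Vt k → Prop
  | Sum.inl i, Sum.inr (Sum.inl v) => v i = 0
  | Sum.inl i, Sum.inr (Sum.inr (Sum.inl T)) => T i = false
  | Sum.inl _, Sum.inr (Sum.inr (Sum.inr _)) => True
  | Sum.inr (Sum.inl v), Sum.inr (Sum.inr (Sum.inl T)) => T = cls v
  | Sum.inr (Sum.inr (Sum.inl _)), Sum.inr (Sum.inr (Sum.inr _)) => True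
  | _, _ => False

def Gk (k : ℕ) : SimpleGraph (Vt k) := SimpleGraph.fromRel rel

lemma adj_ab {i : Fin k} {v : Fin k → Fin 3} : (Gk k).Adj (va i) (vb v) ↔ v i = 0 := by
  simp [Gk, va, vb, SimpleGraph.fromRel_adj, rel]

lemma adj_ax {i : Fin k} {T : Fin k → Bool} : (Gk k).Adj (va i) (vx T) ↔ T i = false := by
  simp [Gk, va, vx, SimpleGraph.fromRel_adj, rel]

lemma adj_ag {i : Fin k} : (Gk k).Adj (va i) vg := by
  simp [Gk, va, vg, SimpleGraph.fromRel_adj, rel]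

lemma adj_bx {v : Fin k → Fin 3} {T : Fin k → Bool} :
    (Gk k).Adj (vb v) (vx T) ↔ T = cls v := by
  simp [Gk, vb, vx, SimpleGraph.fromRel_adj, rel]

lemma adj_xg {T : Fin k → Bool} : (Gk k).Adj (vx T) vg := by
  simp [Gk, vx, vg, SimpleGraph.fromRel_adj, rel]

lemma not_adj_aa {i j : Fin k} : ¬ (Gk k).Adj (va i) (va j) := by
  simp [Gk, va, SimpleGraph.fromRel_adj, rel]

lemma not_adj_bb {v u : Fin k → Fin 3} : ¬ (Gk k).Adj (vb v) (vb u) := by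
  simp [Gk, vb, SimpleGraph.fromRel_adj, rel]

lemma not_adj_xx {T U : Fin k → Bool} : ¬ (Gk k).Adj (vx T) (vx U) := by
  simp [Gk, vx, SimpleGraph.fromRel_adj, rel]

lemma not_adj_bg {v : Fin k → Fin 3} : ¬ (Gk k).Adj (vb v) vg := by
  simp [Gk, vb, vg, SimpleGraph.fromRel_adj, rel]

lemma adj_b_elim {v : Fin k → Fin 3} {w : Vt k} (h : (Gk k).Adj (vb v) w) :
    (∃ i, w = va i ∧ v i = 0) ∨ w = vx (cls v) := by
  rcases w with i | w; · exact Or.inl ⟨i, rfl, adj_ab.mp h.symm⟩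
  rcases w with u | w
  · exact absurd h not_adj_bb
  rcases w with T | u
  · exact Or.inr (by rw [adj_bx.mp h]; rfl)
  · exact absurd h (by cases u; exact not_adj_bg)


section
variable {k : ℕ} {V : Type*} {G : SimpleGraph V}

lemma three_le_dist {u v : V} (hr : G.Reachable u v) (hne : u ≠ v) (hnadj : ¬ G.Adj u v)
    (hmid : ∀ w, G.Adj u w → ¬ G.Adj w v) : 3 ≤ G.dist u v := by
  obtain ⟨p, hp⟩ := hr.exists_walk_length_eq_dist
  rw [← hp]
  cases p with
  | nil => exact absurd rfl hne
  | cons h q =>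
    cases q with
    | nil => exact absurd h hnadj
    | cons h' q' =>
      cases q' with
      | nil => exact absurd h' (hmid _ h)
      | cons h'' q'' => simp [SimpleGraph.Walk.length_cons]

lemma dist_le_two {u v w : V} (h1 : G.Adj u w) (h2 : G.Adj w v) : G.dist u v ≤ 2 := by
  have := SimpleGraph.dist_le (SimpleGraph.Walk.cons h1 (SimpleGraph.Walk.cons h2 SimpleGraph.Walk.nil))
  simpa using this

lemma dist_le_three {u v w z : V} (h1 : G.Adj u w) (h2 : G.Adj w z) (h3 : G.Adj z v) :
    G.dist u v ≤ 3 := by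
  have := SimpleGraph.dist_le (SimpleGraph.Walk.cons h1 (SimpleGraph.Walk.cons h2
    (SimpleGraph.Walk.cons h3 SimpleGraph.Walk.nil)))
  simpa using this

lemma dist_eq_two' {u v w : V} (hne : u ≠ v) (hnadj : ¬ G.Adj u v) (h1 : G.Adj u w)
    (h2 : G.Adj w v) : G.dist u v = 2 := by
  have hle := dist_le_two h1 h2
  have h0 : G.dist u v ≠ 0 := fun h => by
    rcases SimpleGraph.dist_eq_zero_iff_eq_or_not_reachable.mp h with h' | h'
    · exact hne h'
    · exact h' ⟨SimpleGraph.Walk.cons h1 (SimpleGraph.Walk.cons h2 SimpleGraph.Walk.nil)⟩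
  have h1' : G.dist u v ≠ 1 := fun h => hnadj (SimpleGraph.dist_eq_one_iff_adj.mp h)
  omega

lemma fin3_cases (x : Fin 3) : x = 0 ∨ x = 1 ∨ x = 2 := by revert x; decide

end


lemma reach_g (u : Vt k) : (Gk k).Reachable u vg := by
  rcases u with i | u
  · exact adj_ag.reachable
  rcases u with v | u
  · exact (adj_bx.mpr rfl).reachable.trans adj_xg.reachable
  rcases u with T | u
  · exact adj_xg.reachable
  · cases u; exact SimpleGraph.Reachable.refl _

lemma Gk_connected : (Gk k).Connected := by
  rw [SimpleGraph.connected_iff]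
  exact ⟨fun u v => (reach_g u).trans (reach_g v).symm, ⟨vg⟩⟩

lemma cls_eq_true {v : Fin k → Fin 3} {i : Fin k} : cls v i = true ↔ v i = 2 := by
  simp [cls]

lemma cls_eq_false {v : Fin k → Fin 3} {i : Fin k} : cls v i = false ↔ ¬ v i = 2 := by
  simp [cls]

lemma ne_ab {i : Fin k} {v} : va i ≠ vb v := by simp [va, vb]
lemma ne_ax {i : Fin k} {T} : va i ≠ vx T := by simp [va, vx]
lemma ne_ag {i : Fin k} : va i ≠ vg := by simp [va, vg]
lemma ne_bx {v : Fin k → Fin 3} {T} : vb v ≠ vx T := by simp [vb, vx]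
lemma ne_bg {v : Fin k → Fin 3} : vb v ≠ vg := by simp [vb, vg]
lemma ne_xg {T : Fin k → Bool} : vx T ≠ vg := by simp [vx, vg]

lemma d_ag {i : Fin k} : (Gk k).dist (va i) vg = 1 :=
  SimpleGraph.dist_eq_one_iff_adj.mpr adj_ag

lemma d_xg {T : Fin k → Bool} : (Gk k).dist (vx T) vg = 1 :=
  SimpleGraph.dist_eq_one_iff_adj.mpr adj_xg

lemma d_bg {v : Fin k → Fin 3} : (Gk k).dist (vb v) vg = 2 :=
  dist_eq_two' ne_bg not_adj_bg (adj_bx.mpr rfl) adj_xg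

lemma d_aa {i j : Fin k} (h : i ≠ j) : (Gk k).dist (va i) (va j) = 2 :=
  dist_eq_two' (by simp [va, h]) not_adj_aa adj_ag adj_ag.symm

lemma d_ba0 {v : Fin k → Fin 3} {j : Fin k} (h : v j = 0) : (Gk k).dist (vb v) (va j) = 1 :=
  SimpleGraph.dist_eq_one_iff_adj.mpr (adj_ab.mpr h).symm

lemma d_ba1 {v : Fin k → Fin 3} {j : Fin k} (h : v j = 1) : (Gk k).dist (vb v) (va j) = 2 := by
  refine dist_eq_two' ne_ab.symm (fun hadj => ?_) (adj_bx.mpr rfl)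
    (adj_ax.mpr (cls_eq_false.mpr (by simp [h]))).symm
  rw [SimpleGraph.adj_comm] at hadj
  rw [adj_ab.mp hadj] at h
  exact absurd h (by decide)

lemma d_ba2 {v : Fin k → Fin 3} {j : Fin k} (h : v j = 2) : (Gk k).dist (vb v) (va j) = 3 := by
  have hle : (Gk k).dist (vb v) (va j) ≤ 3 :=
    dist_le_three (adj_bx.mpr rfl) adj_xg adj_ag.symm
  have hge : 3 ≤ (Gk k).dist (vb v) (va j) := by
    refine three_le_dist ((reach_g _).trans (reach_g _).symm) ne_ab.symm
      (fun hadj => ?_) (fun w hw hwa => ?_)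
    · rw [SimpleGraph.adj_comm] at hadj
      rw [adj_ab.mp hadj] at h; exact absurd h (by decide)
    · rcases adj_b_elim hw with ⟨i, rfl, hi⟩ | rfl
      · exact not_adj_aa hwa
      · have := adj_ax.mp hwa.symm
        rw [cls_eq_false] at this
        exact this h
  omega

lemma d_xa_false {T : Fin k → Bool} {j : Fin k} (h : T j = false) :
    (Gk k).dist (vx T) (va j) = 1 :=
  SimpleGraph.dist_eq_one_iff_adj.mpr (adj_ax.mpr h).symm

lemma d_xa_true {T : Fin k → Bool} {j : Fin k} (h : T j = true) :
    (Gk k).dist (vx T) (va j) = 2 := by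
  refine dist_eq_two' ne_ax.symm (fun hadj => ?_) adj_xg adj_ag.symm
  rw [SimpleGraph.adj_comm] at hadj
  rw [adj_ax.mp hadj] at h; exact absurd h (by decide)

lemma d_ba_pos {v : Fin k → Fin 3} {j : Fin k} : 0 < (Gk k).dist (vb v) (va j) := by
  rcases fin3_cases (v j) with h | h | h
  · rw [d_ba0 h]; omega
  · rw [d_ba1 h]; omega
  · rw [d_ba2 h]; omega

lemma dist_x_le {v : Fin k → Fin 3} {w : Vt k} (hw : w ≠ vb v) :
    (Gk k).dist (vx (cls v)) w ≤ (Gk k).dist (vb v) w := by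
  obtain ⟨p, hp⟩ := ((reach_g (vb v)).trans (reach_g w).symm).exists_walk_length_eq_dist
  rw [← hp]
  cases p with
  | nil => exact absurd rfl hw.symm
  | cons h q =>
    rcases adj_b_elim h with ⟨i, heq, hi⟩ | heq
    · subst heq
      have hadj : (Gk k).Adj (vx (cls v)) (va i) :=
        (adj_ax.mpr (cls_eq_false.mpr (by simp [hi]))).symm
      have := SimpleGraph.dist_le (SimpleGraph.Walk.cons hadj q)
      simpa using this
    · subst heq
      have := SimpleGraph.dist_le q
      simp [SimpleGraph.Walk.length_cons]
      omega

lemma edgeDist_mk {u v w : Vt k} :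
    edgeDist (Gk k) s(u, v) w = min ((Gk k).dist u w) ((Gk k).dist v w) := rfl

lemma key_pair {S : Finset (Vt k)} (hS : IsEdgeResolvingSet (Gk k) ↑S)
    {v u : Fin k → Fin 3} (hvu : v ≠ u) (hcls : cls v = cls u) :
    vb v ∈ S ∨ vb u ∈ S := by
  by_contra hcon
  push_neg at hcon
  have hev : s(vx (cls v), vb v) ∈ (Gk k).edgeSet := by
    rw [SimpleGraph.mem_edgeSet]; exact (adj_bx.mpr rfl).symm
  have heu : s(vx (cls v), vb u) ∈ (Gk k).edgeSet := by
    rw [SimpleGraph.mem_edgeSet]; exact (adj_bx.mpr hcls).symm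
  have hne : s(vx (cls v), vb v) ≠ s(vx (cls v), vb u) := by
    simp [Sym2.eq_iff, vb, vx, hvu]
  obtain ⟨w, hwS, hwd⟩ := hS _ hev _ heu hne
  apply hwd
  rw [edgeDist_mk, edgeDist_mk]
  have hwx : w ≠ vb v := fun h => hcon.1 (h ▸ hwS)
  have hwu : w ≠ vb u := fun h => hcon.2 (h ▸ hwS)
  rw [min_eq_left (dist_x_le hwx), min_eq_left (by rw [hcls]; exact dist_x_le hwu)]

lemma edim_lower {S : Finset (Vt k)} (hS : IsEdgeResolvingSet (Gk k) ↑S) :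
    3 ^ k - 2 ^ k ≤ S.card := by
  classical
  set Bad : Finset (Fin k → Fin 3) := Finset.univ.filter (fun v => vb v ∉ S) with hBad
  set Good : Finset (Fin k → Fin 3) := Finset.univ.filter (fun v => vb v ∈ S) with hGood
  have hBadcard : Bad.card ≤ 2 ^ k := by
    have hinj : Set.InjOn cls (Bad : Set (Fin k → Fin 3)) := by
      intro v hv u hu hc
      by_contra hvu
      rcases key_pair hS hvu hc with h | h
      · exact (Finset.mem_filter.mp hv).2 h
      · exact (Finset.mem_filter.mp hu).2 h
    calc Bad.card ≤ (Finset.univ : Finset (Fin k → Bool)).card :=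
          Finset.card_le_card_of_injOn cls (fun _ _ => Finset.mem_univ _) hinj
      _ = 2 ^ k := by simp
  have hGoodcard : Good.card ≤ S.card := by
    apply Finset.card_le_card_of_injOn vb
    · intro v hv; exact (Finset.mem_filter.mp hv).2
    · intro v _ u _ h; simpa [vb] using h
  have hsum : Good.card + Bad.card = 3 ^ k := by
    rw [hGood, hBad, Finset.card_filter_add_card_filter_not]
    simp
  omega

lemma d_xa_pos {T : Fin k → Bool} {j : Fin k} : 0 < (Gk k).dist (vx T) (va j) := by
  rcases Bool.eq_false_or_eq_true (T j) with h | h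
  · rw [d_xa_true h]; omega
  · rw [d_xa_false h]; omega

def Sres (k : ℕ) : Finset (Vt k) := (Finset.univ.image va) ∪ {vg}

lemma Sres_card : (Sres k).card = k + 1 := by
  classical
  rw [Sres, Finset.card_union_of_disjoint, Finset.card_image_of_injective]
  · simp
  · intro i j h; simpa [va] using h
  · simp [Finset.disjoint_left, va, vg]

lemma mem_Sres_a {i : Fin k} : va i ∈ (↑(Sres k) : Set (Vt k)) :=
  Finset.mem_coe.mpr (Finset.mem_union_left _ (Finset.mem_image_of_mem va (Finset.mem_univ i)))

lemma mem_Sres_g : vg ∈ (↑(Sres k) : Set (Vt k)) :=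
  Finset.mem_coe.mpr (Finset.mem_union_right _ (Finset.mem_singleton_self _))

lemma vt_cases (u : Vt k) :
    (∃ i, u = va i) ∨ (∃ v, u = vb v) ∨ (∃ T, u = vx T) ∨ u = vg := by
  rcases u with i | u
  · exact Or.inl ⟨i, rfl⟩
  rcases u with v | u
  · exact Or.inr (Or.inl ⟨v, rfl⟩)
  rcases u with T | u
  · exact Or.inr (Or.inr (Or.inl ⟨T, rfl⟩))
  · cases u; exact Or.inr (Or.inr (Or.inr rfl))

lemma d_gg : (Gk k).dist (vg : Vt k) vg = 0 := SimpleGraph.dist_self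

lemma Sres_resolving : IsResolvingSet (Gk k) ↑(Sres k) := by
  classical
  intro u u' hne
  rcases vt_cases u with ⟨i, rfl⟩ | ⟨v, rfl⟩ | ⟨T, rfl⟩ | rfl
  · rcases vt_cases u' with ⟨i', rfl⟩ | ⟨v', rfl⟩ | ⟨T', rfl⟩ | rfl
    · have hii : i ≠ i' := fun h => hne (by rw [h])
      exact ⟨va i, mem_Sres_a, by rw [SimpleGraph.dist_self, d_aa hii.symm]; omega⟩
    · refine ⟨va i, mem_Sres_a, ?_⟩
      rw [SimpleGraph.dist_self]
      have := d_ba_pos (v := v') (j := i); omega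
    · refine ⟨va i, mem_Sres_a, ?_⟩
      rw [SimpleGraph.dist_self]
      have := d_xa_pos (T := T') (j := i); omega
    · exact ⟨vg, mem_Sres_g, by rw [d_ag, d_gg]; omega⟩
  · rcases vt_cases u' with ⟨i', rfl⟩ | ⟨v', rfl⟩ | ⟨T', rfl⟩ | rfl
    · refine ⟨va i', mem_Sres_a, ?_⟩
      rw [SimpleGraph.dist_self]
      have := d_ba_pos (v := v) (j := i'); omega
    · have hvv : v ≠ v' := fun h => hne (by rw [h])
      obtain ⟨j, hj⟩ : ∃ j, v j ≠ v' j := by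
        by_contra hcon; push_neg at hcon; exact hvv (funext hcon)
      refine ⟨va j, mem_Sres_a, ?_⟩
      rcases fin3_cases (v j) with h1 | h1 | h1 <;> rcases fin3_cases (v' j) with h2 | h2 | h2 <;>
        first
          | exact absurd (h1.trans h2.symm) hj
          | (first
              | (rw [d_ba0 h1]; rw [d_ba1 h2]; omega)
              | (rw [d_ba0 h1]; rw [d_ba2 h2]; omega)
              | (rw [d_ba1 h1]; rw [d_ba0 h2]; omega)
              | (rw [d_ba1 h1]; rw [d_ba2 h2]; omega)
              | (rw [d_ba2 h1]; rw [d_ba0 h2]; omega)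
              | (rw [d_ba2 h1]; rw [d_ba1 h2]; omega))
    · exact ⟨vg, mem_Sres_g, by rw [d_bg, d_xg]; omega⟩
    · exact ⟨vg, mem_Sres_g, by rw [d_bg, d_gg]; omega⟩
  · rcases vt_cases u' with ⟨i', rfl⟩ | ⟨v', rfl⟩ | ⟨T', rfl⟩ | rfl
    · refine ⟨va i', mem_Sres_a, ?_⟩
      rw [SimpleGraph.dist_self]
      have := d_xa_pos (T := T) (j := i'); omega
    · exact ⟨vg, mem_Sres_g, by rw [d_xg, d_bg]; omega⟩
    · have hTT : T ≠ T' := fun h => hne (by rw [h])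
      obtain ⟨j, hj⟩ : ∃ j, T j ≠ T' j := by
        by_contra hcon; push_neg at hcon; exact hTT (funext hcon)
      refine ⟨va j, mem_Sres_a, ?_⟩
      rcases Bool.eq_false_or_eq_true (T j) with h1 | h1 <;>
        rcases Bool.eq_false_or_eq_true (T' j) with h2 | h2 <;>
        first
          | exact absurd (h1.trans h2.symm) hj
          | (rw [d_xa_false h1, d_xa_true h2]; omega)
          | (rw [d_xa_true h1, d_xa_false h2]; omega)
    · exact ⟨vg, mem_Sres_g, by rw [d_xg, d_gg]; omega⟩
  · rcases vt_cases u' with ⟨i', rfl⟩ | ⟨v', rfl⟩ | ⟨T', rfl⟩ | rfl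
    · exact ⟨vg, mem_Sres_g, by rw [d_gg, d_ag]; omega⟩
    · exact ⟨vg, mem_Sres_g, by rw [d_gg, d_bg]; omega⟩
    · exact ⟨vg, mem_Sres_g, by rw [d_gg, d_xg]; omega⟩
    · exact absurd rfl hne
lemma edgeDist_mk' {V : Type*} {G : SimpleGraph V} {u v w : V} :
    edgeDist G s(u, v) w = min (G.dist u w) (G.dist v w) := rfl

lemma univ_edge_resolving {V : Type*} [Fintype V] {G : SimpleGraph V} (hc : G.Connected) :
    IsEdgeResolvingSet G ↑(Finset.univ : Finset V) := by
  intro e he f hf hef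
  induction e using Sym2.inductionOn with
  | hf a b =>
  induction f using Sym2.inductionOn with
  | hf c d =>
  rw [SimpleGraph.mem_edgeSet] at he hf
  have key : ∀ (c' d' w : V), G.Adj c' d' → w ≠ c' → w ≠ d' →
      edgeDist G s(c', d') w ≠ 0 := by
    intro c' d' w hadj h1 h2
    rw [edgeDist_mk']
    have p1 := hc.pos_dist_of_ne (h1.symm : c' ≠ w)
    have p2 := hc.pos_dist_of_ne (h2.symm : d' ≠ w)
    omega
  have z1 : edgeDist G s(a, b) a = 0 := by
    rw [edgeDist_mk', SimpleGraph.dist_self]; omega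
  have z2 : edgeDist G s(a, b) b = 0 := by
    rw [edgeDist_mk', SimpleGraph.dist_self]; omega
  by_cases h1 : a = c
  · subst h1
    have hbd : b ≠ d := fun h => hef (by rw [h])
    have hbc : b ≠ a := he.ne'
    exact ⟨b, by simp, by rw [z2]; exact (key _ _ _ hf hbc hbd).symm⟩
  · by_cases h2 : a = d
    · subst h2
      have hbc : b ≠ c := fun h => hef (by rw [h, Sym2.eq_swap])
      have hbd : b ≠ a := he.ne'
      exact ⟨b, by simp, by rw [z2]; exact (key _ _ _ hf hbc hbd).symm⟩
    · exact ⟨a, by simp, by rw [z1]; exact (key _ _ _ hf h1 h2).symm⟩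

lemma card_Vt : Fintype.card (Vt k) = k + (3 ^ k + (2 ^ k + 1)) := by
  simp [Vt]

lemma metricDim_le : metricDim (Gk k) ≤ k + 1 :=
  Nat.sInf_le ⟨Sres k, Sres_resolving, Sres_card⟩

lemma edgeMetricDim_ge : 3 ^ k - 2 ^ k ≤ edgeMetricDim (Gk k) := by
  apply le_csInf
  · exact ⟨(Finset.univ : Finset (Vt k)).card, Finset.univ,
      univ_edge_resolving Gk_connected, rfl⟩
  · rintro n ⟨S, hS, rfl⟩
    exact edim_lower hS

end St15


/-- for every `ε > 0` and `C > 0` there is a finite connected graph `G`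
with `edim(G) ≥ C · 2^(dim G)` and `edim(G) ≥ (1 - ε)|V(G)|`. -/
theorem statement15 (ε C : ℝ) (hε : 0 < ε) (hC : 0 < C) :
    ∃ (V : Type) (_ : Fintype V) (G : SimpleGraph V), G.Connected ∧
      C * (2 : ℝ) ^ (metricDim G) ≤ (edgeMetricDim G : ℝ) ∧
      (1 - ε) * (Fintype.card V : ℝ) ≤ (edgeMetricDim G : ℝ) := by
  obtain ⟨m, hm⟩ := pow_unbounded_of_one_lt (R := ℝ) (max (3 / ε) (2 * C + 1))
    (by norm_num : (1 : ℝ) < 3 / 2)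
  set k := m + 1 with hk
  have hmono : ((3 : ℝ) / 2) ^ m ≤ (3 / 2 : ℝ) ^ k :=
    pow_le_pow_right₀ (by norm_num) (Nat.le_succ m)
  have hbig : max (3 / ε) (2 * C + 1) ≤ (3 / 2 : ℝ) ^ k := le_trans hm.le hmono
  have h2pos : (0 : ℝ) < 2 ^ k := by positivity
  have h3pos : (0 : ℝ) < 3 ^ k := by positivity
  have hsplit : ((3 : ℝ) / 2) ^ k * 2 ^ k = 3 ^ k := by
    rw [div_pow]; field_simp
  have hC2 : 2 * C + 1 ≤ (3 / 2 : ℝ) ^ k := le_trans (le_max_right _ _) hbig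
  have hε2 : 3 / ε ≤ (3 / 2 : ℝ) ^ k := le_trans (le_max_left _ _) hbig
  have hε3 : 3 * 2 ^ k ≤ ε * 3 ^ k := by
    have := (div_le_iff₀ hε).mp hε2
    nlinarith
  have hdiff : (2 : ℝ) * C * 2 ^ k ≤ 3 ^ k - 2 ^ k := by nlinarith
  -- the graph
  refine ⟨St15.Vt k, inferInstance, St15.Gk k, St15.Gk_connected, ?_, ?_⟩
  · -- C * 2^dim ≤ edim
    have hdim : metricDim (St15.Gk k) ≤ k + 1 := St15.metricDim_le
    have hpow : (2 : ℝ) ^ (metricDim (St15.Gk k)) ≤ 2 ^ (k + 1) :=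
      pow_le_pow_right₀ (by norm_num) hdim
    have hedim : ((3 ^ k - 2 ^ k : ℕ) : ℝ) ≤ (edgeMetricDim (St15.Gk k) : ℝ) :=
      Nat.cast_le.mpr St15.edgeMetricDim_ge
    have hcast : ((3 ^ k - 2 ^ k : ℕ) : ℝ) = (3 : ℝ) ^ k - 2 ^ k := by
      rw [Nat.cast_sub (Nat.pow_le_pow_left (by norm_num) k)]
      push_cast; ring
    have : C * (2 : ℝ) ^ (metricDim (St15.Gk k)) ≤ C * 2 ^ (k + 1) := by
      apply mul_le_mul_of_nonneg_left hpow hC.le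
    calc C * (2 : ℝ) ^ (metricDim (St15.Gk k)) ≤ C * 2 ^ (k + 1) := this
      _ = 2 * C * 2 ^ k := by ring
      _ ≤ 3 ^ k - 2 ^ k := hdiff
      _ = ((3 ^ k - 2 ^ k : ℕ) : ℝ) := hcast.symm
      _ ≤ _ := hedim
  · -- (1 - ε) * card ≤ edim
    have hedim : ((3 ^ k - 2 ^ k : ℕ) : ℝ) ≤ (edgeMetricDim (St15.Gk k) : ℝ) :=
      Nat.cast_le.mpr St15.edgeMetricDim_ge
    have hcast : ((3 ^ k - 2 ^ k : ℕ) : ℝ) = (3 : ℝ) ^ k - 2 ^ k := by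
      rw [Nat.cast_sub (Nat.pow_le_pow_left (by norm_num) k)]
      push_cast; ring
    have hcard : (Fintype.card (St15.Vt k) : ℝ) = k + 3 ^ k + 2 ^ k + 1 := by
      rw [St15.card_Vt]; push_cast; ring
    have hk2 : (k : ℝ) + 1 ≤ 2 ^ k := by
      have h := Nat.lt_two_pow_self (n := k)
      have h' : k + 1 ≤ 2 ^ k := h
      exact_mod_cast Nat.cast_le.mpr h'
    rw [hcard]
    have hεn : ε * (k + 3 ^ k + 2 ^ k + 1) ≥ ε * 3 ^ k := by
      apply mul_le_mul_of_nonneg_left _ hε.le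
      have : (0:ℝ) ≤ k := Nat.cast_nonneg k
      nlinarith
    calc (1 - ε) * ((k : ℝ) + 3 ^ k + 2 ^ k + 1)
        = ((k : ℝ) + 3 ^ k + 2 ^ k + 1) - ε * ((k : ℝ) + 3 ^ k + 2 ^ k + 1) := by ring
      _ ≤ ((k : ℝ) + 3 ^ k + 2 ^ k + 1) - ε * 3 ^ k := by linarith
      _ ≤ ((k : ℝ) + 3 ^ k + 2 ^ k + 1) - 3 * 2 ^ k := by linarith
      _ ≤ 3 ^ k - 2 ^ k := by linarith
      _ = ((3 ^ k - 2 ^ k : ℕ) : ℝ) := hcast.symm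
      _ ≤ _ := hedim
end

section
/- For every integer k ≥ 1, there exists a finite connected simple graph G with metric dimension exactly k, order |V(G)| = 3^k + k, and edge metric dimension edim(G) ≥ 3^k − 1 − 2^k. In particular, for each k there exist graphs with metric dimension k, edge metric dimension 3^k(1 − o(1)), and order 3^k(1 + o(1)). -/
open SimpleGraph

namespace St16

/-- The vertex type: grid points plus `k` apex vertices. -/
abbrev Vk (k : ℕ) := (Fin k → Fin 3) ⊕ Fin k

/-- The graph: grid with strong-product adjacency; apex `i` joined to all grid
points whose `i`-th coordinate is `0`. -/
def Gk (k : ℕ) : SimpleGraph (Vk k) where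
  Adj u v :=
    match u, v with
    | .inl x, .inl y => x ≠ y ∧ ∀ i, (x i : ℕ) ≤ y i + 1 ∧ (y i : ℕ) ≤ x i + 1
    | .inl x, .inr i => x i = 0
    | .inr i, .inl x => x i = 0
    | .inr _, .inr _ => False
  symm := by
    refine ⟨?_⟩
    rintro (x | i) (y | j) h
    · exact ⟨h.1.symm, fun i => ⟨(h.2 i).2, (h.2 i).1⟩⟩
    · exact h
    · exact h
    · exact h
  loopless := by
    refine ⟨?_⟩
    rintro (x | i) h
    · exact h.1 rfl
    · exact h

variable {k : ℕ}

lemma adj_inl_inl {x y : Fin k → Fin 3}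
    (hne : x ≠ y) (h : ∀ i, (x i : ℕ) ≤ y i + 1 ∧ (y i : ℕ) ≤ x i + 1) :
    (Gk k).Adj (.inl x) (.inl y) := ⟨hne, h⟩

lemma adj_inl_inr {x : Fin k → Fin 3} {i : Fin k} (h : x i = 0) :
    (Gk k).Adj (.inl x) (.inr i) := h

/-- The center vertex of the grid. -/
def ctr (k : ℕ) : Fin k → Fin 3 := fun _ => 1

lemma adj_ctr {x : Fin k → Fin 3} (h : x ≠ ctr k) : (Gk k).Adj (.inl x) (.inl (ctr k)) := by
  refine adj_inl_inl h fun i => ⟨?_, ?_⟩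
  · have := (x i).isLt; simp [ctr]; omega
  · simp [ctr]

lemma adj_update (x : Fin k → Fin 3) (i : Fin k) (c : Fin 3) (h1 : x i ≠ c)
    (h2 : (x i : ℕ) ≤ (c : ℕ) + 1) (h3 : (c : ℕ) ≤ (x i : ℕ) + 1) :
    (Gk k).Adj (.inl x) (.inl (Function.update x i c)) := by
  refine adj_inl_inl ?_ fun j => ?_
  · intro h
    exact h1 (by simpa using congrFun h i)
  · rcases eq_or_ne j i with rfl | hj
    · simpa using ⟨h2, h3⟩
    · simp [Function.update_of_ne hj]

lemma reach_to_ctr (v : Vk k) : (Gk k).Reachable v (.inl (ctr k)) := by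
  rcases v with x | i
  · rcases eq_or_ne x (ctr k) with rfl | h
    · exact Reachable.refl _
    · exact (adj_ctr h).reachable
  · have h1 : (Gk k).Adj (.inr i) (.inl (Function.update (ctr k) i 0)) := by
      show Function.update (ctr k) i 0 i = 0
      simp
    have h2 : (Gk k).Adj (.inl (Function.update (ctr k) i 0)) (.inl (ctr k)) := by
      refine adj_ctr ?_
      intro h
      have := congrFun h i
      simp [ctr] at this
    exact h1.reachable.trans h2.reachable

lemma Gk_connected : (Gk k).Connected := by
  rw [connected_iff]
  refine ⟨fun u v => (reach_to_ctr u).trans (reach_to_ctr v).symm, ⟨.inl (ctr k)⟩⟩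

/-- 1-Lipschitz functions lower-bound distances. -/
lemma lipschitz_le_walk {V : Type*} {G : SimpleGraph V} (f : V → ℕ)
    (hf : ∀ u v, G.Adj u v → f u ≤ f v + 1) {u v : V} (p : G.Walk u v) :
    f u ≤ f v + p.length := by
  induction p with
  | nil => simp
  | @cons a b c hab p ih =>
    have := hf a b hab
    simp only [Walk.length_cons]
    omega

lemma lipschitz_le_dist {V : Type*} {G : SimpleGraph V} (f : V → ℕ)
    (hf : ∀ u v, G.Adj u v → f u ≤ f v + 1) {u v : V} (h : G.Reachable u v) :
    f u ≤ f v + G.dist u v := by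
  obtain ⟨p, hp⟩ := h.exists_walk_length_eq_dist
  rw [← hp]
  exact lipschitz_le_walk f hf p

lemma fin3_cases : ∀ t : Fin 3, t = 0 ∨ t = 1 ∨ t = 2 := by decide

/-- The distance from a grid point to apex `i` is `x i + 1`. -/
lemma dist_apex (x : Fin k → Fin 3) (i : Fin k) :
    (Gk k).dist (.inl x) (.inr i) = (x i : ℕ) + 1 := by
  refine le_antisymm ?_ ?_
  · rcases fin3_cases (x i) with h | h | h
    · have a1 : (Gk k).Adj (.inl x) (.inr i) := adj_inl_inr h
      simpa [h] using dist_le (Walk.cons a1 Walk.nil)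
    · have a1 : (Gk k).Adj (.inl x) (.inl (Function.update x i 0)) := by
        refine adj_update x i 0 (by simp [h]) (by simp [h]) (by simp)
      have a2 : (Gk k).Adj (.inl (Function.update x i 0)) (.inr i) :=
        adj_inl_inr (by simp)
      simpa [h] using dist_le (Walk.cons a1 (Walk.cons a2 Walk.nil))
    · have a1 : (Gk k).Adj (.inl x) (.inl (Function.update x i 1)) := by
        refine adj_update x i 1 (by simp [h]) (by simp [h]) (by simp [h])
      have a2 : (Gk k).Adj (.inl (Function.update x i 1))
          (.inl (Function.update (Function.update x i 1) i 0)) := by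
        refine adj_update _ i 0 (by simp) (by simp) (by simp)
      have a3 : (Gk k).Adj (.inl (Function.update (Function.update x i 1) i 0)) (.inr i) :=
        adj_inl_inr (by simp)
      simpa [h] using dist_le (Walk.cons a1 (Walk.cons a2 (Walk.cons a3 Walk.nil)))
  · set f : Vk k → ℕ :=
      Sum.elim (fun z => (z i : ℕ) + 1) (fun j => if j = i then 0 else 2) with hfdef
    have hf : ∀ u v, (Gk k).Adj u v → f u ≤ f v + 1 := by
      rintro (z | j) (w | l) h
      · have := (h.2 i).1; simp only [hfdef, Sum.elim_inl]; omega
      · have hz := (z i).isLt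
        simp only [hfdef, Sum.elim_inl, Sum.elim_inr]
        rcases eq_or_ne l i with rfl | hl
        · have hz0 : z l = 0 := h
          simp [hz0]
        · simp only [if_neg hl]; omega
      · have hw := (w i).isLt
        simp only [hfdef, Sum.elim_inl, Sum.elim_inr]
        rcases eq_or_ne j i with rfl | hj
        · simp
        · simp only [if_neg hj]; omega
      · exact h.elim
    have hle := lipschitz_le_dist f hf ((Gk_connected) (.inl x) (.inr i))
    simp [hfdef] at hle
    omega

lemma dist_grid_le_two (x z : Fin k → Fin 3) : (Gk k).dist (.inl x) (.inl z) ≤ 2 := by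
  rcases eq_or_ne x z with rfl | hxz
  · simp [SimpleGraph.dist_self]
  rcases eq_or_ne x (ctr k) with rfl | hx
  · calc (Gk k).dist (.inl (ctr k)) (.inl z) ≤ _ :=
          dist_le (Walk.cons ((adj_ctr hxz.symm).symm) Walk.nil)
      _ ≤ 2 := by simp
  rcases eq_or_ne z (ctr k) with rfl | hz
  · calc (Gk k).dist (.inl x) (.inl (ctr k)) ≤ _ :=
          dist_le (Walk.cons (adj_ctr hx) Walk.nil)
      _ ≤ 2 := by simp
  · calc (Gk k).dist (.inl x) (.inl z) ≤ _ :=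
          dist_le (Walk.cons (adj_ctr hx) (Walk.cons ((adj_ctr hz).symm) Walk.nil))
      _ ≤ 2 := by simp

lemma dist_ctr_grid {z : Fin k → Fin 3} (hz : z ≠ ctr k) :
    (Gk k).dist (.inl (ctr k)) (.inl z) = 1 :=
  dist_eq_one_iff_adj.mpr ((adj_ctr hz).symm)

lemma dist_apex_apex {i j : Fin k} (hij : i ≠ j) :
    (Gk k).dist (.inr i) (.inr j) = 2 := by
  have hub : (Gk k).dist (.inr i) (.inr j) ≤ 2 := by
    have a1 : (Gk k).Adj (.inr i) (.inl (fun _ => 0)) := rfl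
    have a2 : (Gk k).Adj (.inl (fun _ : Fin k => (0 : Fin 3))) (.inr j) := rfl
    simpa using dist_le (Walk.cons a1 (Walk.cons a2 Walk.nil))
  have h0 : (Gk k).dist (.inr i) (.inr j) ≠ 0 := fun h => by
    have := (Gk_connected).dist_eq_zero_iff.mp h
    simp [hij] at this
  have h1 : (Gk k).dist (.inr i) (.inr j) ≠ 1 := fun h =>
    dist_eq_one_iff_adj.mp h
  omega

lemma edgeDist_mk {W : Type*} (G : SimpleGraph W) (u v w : W) :
    edgeDist G s(u, v) w = min (G.dist u w) (G.dist v w) := rfl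

lemma edgeDist_eq_zero_left {W : Type*} {G : SimpleGraph W} (u v w : W) (h : w = u ∨ w = v) :
    edgeDist G s(u, v) w = 0 := by
  rcases h with rfl | rfl <;> simp [edgeDist_mk, SimpleGraph.dist_self]

lemma edgeDist_ne_zero {W : Type*} {G : SimpleGraph W} (hc : G.Connected) (u v w : W)
    (h1 : w ≠ u) (h2 : w ≠ v) : edgeDist G s(u, v) w ≠ 0 := by
  rw [edgeDist_mk]
  have d1 : G.dist u w ≠ 0 := fun h => h1 (hc.dist_eq_zero_iff.mp h).symm
  have d2 : G.dist v w ≠ 0 := fun h => h2 (hc.dist_eq_zero_iff.mp h).symm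
  omega

lemma univ_edge_resolving {W : Type*} [Fintype W] {G : SimpleGraph W} (hc : G.Connected) :
    IsEdgeResolvingSet G ↑(Finset.univ : Finset W) := by
  intro e he f hf hne
  induction e using Sym2.ind with | _ a b =>
  induction f using Sym2.ind with | _ c d =>
  rw [mem_edgeSet] at he hf
  have hab := he.ne
  have key : ∀ w : W, edgeDist G s(a, b) w ≠ edgeDist G s(c, d) w →
      ∃ w ∈ ↑(Finset.univ : Finset W), edgeDist G s(a, b) w ≠ edgeDist G s(c, d) w :=
    fun w hw => ⟨w, by simp, hw⟩
  rcases eq_or_ne a c with rfl | hac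
  · rcases eq_or_ne b d with rfl | hbd
    · exact absurd rfl hne
    · refine key b ?_
      rw [edgeDist_eq_zero_left a b b (Or.inr rfl)]
      exact (edgeDist_ne_zero hc a d b (Ne.symm hab) hbd).symm
  · rcases eq_or_ne a d with rfl | had
    · rcases eq_or_ne b c with rfl | hbc
      · exact absurd Sym2.eq_swap hne
      · refine key b ?_
        rw [edgeDist_eq_zero_left a b b (Or.inr rfl)]
        exact (edgeDist_ne_zero hc c a b hbc (Ne.symm hab)).symm
    · refine key a ?_
      rw [edgeDist_eq_zero_left a b a (Or.inl rfl)]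
      exact (edgeDist_ne_zero hc c d a hac had).symm

lemma claimA {x y : Fin k → Fin 3} (hx : x ≠ ctr k) (hy : y ≠ ctr k)
    (hpat : ∀ i, x i = 0 ↔ y i = 0) (w : Vk k)
    (hw : edgeDist (Gk k) s(.inl x, .inl (ctr k)) w ≠
          edgeDist (Gk k) s(.inl y, .inl (ctr k)) w) :
    w = .inl x ∨ w = .inl y := by
  rcases w with z | i
  · rcases eq_or_ne z x with rfl | hzx
    · exact Or.inl rfl
    rcases eq_or_ne z y with rfl | hzy
    · exact Or.inr rfl
    exfalso
    apply hw
    rcases eq_or_ne z (ctr k) with rfl | hzc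
    · rw [edgeDist_mk, edgeDist_mk, SimpleGraph.dist_self]
      simp
    · have d1 : (Gk k).dist (Sum.inl (ctr k)) (Sum.inl z) = 1 := dist_ctr_grid hzc
      have dx : (Gk k).dist (Sum.inl x) (Sum.inl z) ≠ 0 := fun h =>
        hzx (Sum.inl.inj ((Gk_connected).dist_eq_zero_iff.mp h)).symm
      have dy : (Gk k).dist (Sum.inl y) (Sum.inl z) ≠ 0 := fun h =>
        hzy (Sum.inl.inj ((Gk_connected).dist_eq_zero_iff.mp h)).symm
      rw [edgeDist_mk, edgeDist_mk, d1]
      omega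
  · exfalso
    apply hw
    rw [edgeDist_mk, edgeDist_mk, dist_apex, dist_apex, dist_apex]
    by_cases h0 : x i = 0
    · have h0' : y i = 0 := (hpat i).mp h0
      simp [h0, h0', ctr]
    · have h0' : y i ≠ 0 := fun h => h0 ((hpat i).mpr h)
      have hx1 : 0 < (x i : ℕ) := by
        rcases fin3_cases (x i) with h | h | h <;> simp [h] at h0 ⊢
      have hy1 : 0 < (y i : ℕ) := by
        rcases fin3_cases (y i) with h | h | h <;> simp [h] at h0' ⊢
      simp only [ctr]
      omega

lemma apexSet_resolving :
    IsResolvingSet (Gk k) ↑(Finset.univ.map ⟨Sum.inr, Sum.inr_injective⟩ : Finset (Vk k)) := by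
  intro u v huv
  have hmem : ∀ i : Fin k,
      (Sum.inr i : Vk k) ∈
        ↑(Finset.univ.map ⟨Sum.inr, Sum.inr_injective⟩ : Finset (Vk k)) := by
    intro i; simp
  rcases u with x | i
  · rcases v with y | j
    · have hxy : x ≠ y := fun h => huv (by rw [h])
      obtain ⟨i, hi⟩ := Function.ne_iff.mp hxy
      refine ⟨.inr i, hmem i, ?_⟩
      rw [dist_apex, dist_apex]
      intro h
      exact hi (Fin.val_injective (by omega))
    · exact ⟨.inr j, hmem j, by rw [dist_apex, SimpleGraph.dist_self]; omega⟩
  · rcases v with y | j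
    · exact ⟨.inr i, hmem i, by rw [SimpleGraph.dist_self, dist_apex]; omega⟩
    · have hij : i ≠ j := fun h => huv (by rw [h])
      exact ⟨.inr j, hmem j, by rw [dist_apex_apex hij, SimpleGraph.dist_self]; omega⟩

lemma resolving_card_ge {S : Finset (Vk k)} (hS : IsResolvingSet (Gk k) ↑S) :
    k ≤ S.card := by
  classical
  set b : Vk k → ℕ := Sum.elim (fun _ => 0) (fun _ => 1) with hb
  have hbd : ∀ (x : Fin k → Fin 3) (w : Vk k),
      b w ≤ (Gk k).dist (.inl x) w ∧ (Gk k).dist (.inl x) w ≤ b w + 2 := by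
    intro x w
    rcases w with z | i
    · simpa [hb] using dist_grid_le_two x z
    · rw [dist_apex]; have := (x i).isLt; simp [hb]
  set F : (Fin k → Fin 3) → (↥S → Fin 3) := fun x w =>
    ⟨((Gk k).dist (.inl x) w.val - b w.val) % 3, Nat.mod_lt _ (by norm_num)⟩ with hF
  have hinj : Function.Injective F := by
    intro x y hxy
    by_contra hne
    obtain ⟨w, hwS, hw⟩ := hS (.inl x) (.inl y) (fun h => hne (Sum.inl.inj h))
    have hval := congrArg Fin.val (congrFun hxy ⟨w, Finset.mem_coe.mp hwS⟩)
    simp only [hF] at hval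
    have h1 := hbd x w
    have h2 := hbd y w
    omega
  have hcard := Fintype.card_le_of_injective F hinj
  simp only [Fintype.card_fun, Fintype.card_fin, Fintype.card_coe] at hcard
  exact (Nat.pow_le_pow_iff_right (by norm_num : 1 < 3)).mp hcard

lemma metricDim_eq : metricDim (Gk k) = k := by
  have hmem : k ∈ {m | ∃ S : Finset (Vk k), IsResolvingSet (Gk k) ↑S ∧ S.card = m} :=
    ⟨Finset.univ.map ⟨Sum.inr, Sum.inr_injective⟩, apexSet_resolving, by simp⟩
  refine le_antisymm (Nat.sInf_le hmem) (le_csInf ⟨k, hmem⟩ ?_)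
  rintro m ⟨S, hS, rfl⟩
  exact resolving_card_ge hS

lemma edim_ge : 3 ^ k - 1 - 2 ^ k ≤ edgeMetricDim (Gk k) := by
  classical
  have hne : {m | ∃ S : Finset (Vk k), IsEdgeResolvingSet (Gk k) ↑S ∧ S.card = m}.Nonempty :=
    ⟨_, Finset.univ, univ_edge_resolving Gk_connected, rfl⟩
  obtain ⟨S, hS, hcard⟩ := Nat.sInf_mem hne
  rw [edgeMetricDim, ← hcard]
  set A : Finset (Fin k → Fin 3) := Finset.univ.filter (fun x => x ≠ ctr k) with hA
  have hAcard : A.card = 3 ^ k - 1 := by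
    rw [hA, Finset.filter_ne', Finset.card_erase_of_mem (Finset.mem_univ _)]
    simp
  have key : ∀ x ∈ A, ∀ y ∈ A, x ≠ y → (∀ i, x i = 0 ↔ y i = 0) →
      Sum.inl x ∈ S ∨ Sum.inl y ∈ S := by
    intro x hxA y hyA hxy hpat
    have hx : x ≠ ctr k := (Finset.mem_filter.mp hxA).2
    have hy : y ≠ ctr k := (Finset.mem_filter.mp hyA).2
    have hex : s(Sum.inl x, Sum.inl (ctr k)) ∈ (Gk k).edgeSet := ((Gk k).mem_edgeSet).mpr (adj_ctr hx)
    have hey : s(Sum.inl y, Sum.inl (ctr k)) ∈ (Gk k).edgeSet := ((Gk k).mem_edgeSet).mpr (adj_ctr hy)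
    have hnef : s((Sum.inl x : Vk k), Sum.inl (ctr k)) ≠ s((Sum.inl y : Vk k), Sum.inl (ctr k)) := by
      intro h
      rcases Sym2.eq_iff.mp h with ⟨h1, _⟩ | ⟨h1, _⟩
      · exact hxy (Sum.inl.inj h1)
      · exact hx (Sum.inl.inj h1)
    obtain ⟨w, hwS, hw⟩ := hS _ hex _ hey hnef
    rcases claimA hx hy hpat w hw with rfl | rfl
    · exact Or.inl (Finset.mem_coe.mp hwS)
    · exact Or.inr (Finset.mem_coe.mp hwS)
  set T := A.filter (fun x => Sum.inl x ∉ S) with hT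
  set U := A.filter (fun x => Sum.inl x ∈ S) with hU
  have hTinj : Set.InjOn (fun (x : Fin k → Fin 3) (i : Fin k) => decide (x i = 0)) ↑T := by
    intro x hx y hy hxy2
    by_contra hxyne
    have hpat : ∀ i, x i = 0 ↔ y i = 0 := fun i => by
      have := congrFun hxy2 i
      simpa [decide_eq_decide] using this
    have hxT := Finset.mem_coe.mp hx
    have hyT := Finset.mem_coe.mp hy
    rcases key x (Finset.mem_filter.mp hxT).1 y (Finset.mem_filter.mp hyT).1 hxyne hpat with h | h
    · exact (Finset.mem_filter.mp hxT).2 h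
    · exact (Finset.mem_filter.mp hyT).2 h
  have hTcard : T.card ≤ 2 ^ k := by
    have h := Finset.card_le_card_of_injOn (fun (x : Fin k → Fin 3) (i : Fin k) => decide (x i = 0))
      (fun x _ => Finset.mem_univ _) hTinj
    simpa using h
  have hUcard : U.card ≤ S.card := by
    refine Finset.card_le_card_of_injOn Sum.inl (fun x hx => (Finset.mem_filter.mp hx).2) ?_
    intro a _ b _ h
    exact Sum.inl.inj h
  have hsplit : A.card ≤ U.card + T.card := by
    calc A.card = (U ∪ T).card := by
          rw [hU, hT, Finset.filter_union_filter_not_eq]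
      _ ≤ U.card + T.card := Finset.card_union_le _ _
  have h31 : (1:ℕ) ≤ 3 ^ k := Nat.one_le_pow _ _ (by norm_num)
  omega

end St16


/-- for every `k ≥ 1` there is a finite connected graph with metric
dimension exactly `k`, order `3^k + k`, and edge metric dimension at least
`3^k - 1 - 2^k`. -/
theorem statement16 (k : ℕ) (hk : 1 ≤ k) :
    ∃ (V : Type) (_ : Fintype V) (G : SimpleGraph V), G.Connected ∧
      metricDim G = k ∧ Fintype.card V = 3 ^ k + k ∧
      3 ^ k - 1 - 2 ^ k ≤ edgeMetricDim G := by
  refine ⟨St16.Vk k, inferInstance, St16.Gk k, St16.Gk_connected, St16.metricDim_eq, ?_, St16.edim_ge⟩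
  simp [St16.Vk]
end

section
/- For every integer N, there exists a finite connected simple graph G with metric dimension exactly 2 and edge metric dimension at least N. Consequently, there is no function f such that edim(G) ≤ f(dim(G)) for all finite connected graphs G. -/
open SimpleGraph

namespace S17

abbrev Vn (n : ℕ) := Fin (3*n+4) ⊕ Fin n × Bool

def rel (n : ℕ) : Vn n → Vn n → Prop
  | Sum.inl a, Sum.inl b => (b : ℕ) = (a : ℕ) + 1
  | Sum.inr (i, true), Sum.inl c => (c : ℕ) = 3*(i:ℕ)+3 ∨ (c : ℕ) = 3*(i:ℕ)+4
  | Sum.inr (i, false), Sum.inl c => (c : ℕ) = 3*(i:ℕ)+3 ∨ (c : ℕ) = 3*(i:ℕ)+2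
  | _, _ => False

def Gn (n : ℕ) : SimpleGraph (Vn n) := SimpleGraph.fromRel (rel n)

def pv (n : ℕ) (k : ℕ) (h : k < 3*n+4) : Vn n := Sum.inl ⟨k, h⟩

def f0 (n : ℕ) : Vn n → ℕ
  | Sum.inl a => a
  | Sum.inr (i, true) => 3*(i:ℕ)+4
  | Sum.inr (i, false) => 3*(i:ℕ)+3

def fm (n : ℕ) : Vn n → ℕ
  | Sum.inl a => 3*n+3 - a
  | Sum.inr (i, true) => 3*n - 3*(i:ℕ)
  | Sum.inr (i, false) => 3*n - 3*(i:ℕ) + 1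

lemma lip0 (n : ℕ) : ∀ {u v : Vn n}, (Gn n).Adj u v → f0 n v ≤ f0 n u + 1 := by
  intro u v h
  rw [Gn, SimpleGraph.fromRel_adj] at h
  obtain ⟨hne, h⟩ := h
  rcases u with a | ⟨i, (_|_)⟩ <;> rcases v with c | ⟨j, (_|_)⟩ <;>
    simp only [rel, f0, false_or, or_false, or_self] at h ⊢ <;>
    first
      | exact h.elim
      | omega

lemma lipm (n : ℕ) : ∀ {u v : Vn n}, (Gn n).Adj u v → fm n v ≤ fm n u + 1 := by
  intro u v h
  rw [Gn, SimpleGraph.fromRel_adj] at h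
  obtain ⟨hne, h⟩ := h
  rcases u with a | ⟨i, (_|_)⟩ <;> rcases v with c | ⟨j, (_|_)⟩ <;>
    simp only [rel, fm, false_or, or_false, or_self] at h ⊢ <;>
    first
      | exact h.elim
      | omega


lemma f_le_walk {n : ℕ} (f : Vn n → ℕ) (hf : ∀ {u v : Vn n}, (Gn n).Adj u v → f v ≤ f u + 1) :
    ∀ {u v : Vn n} (p : (Gn n).Walk u v), f v ≤ f u + p.length := by
  intro u v p
  induction p with
  | nil => simp
  | cons h q ih =>
      rw [SimpleGraph.Walk.length_cons]
      have := hf h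
      omega

lemma adj_path {n : ℕ} (a b : Fin (3*n+4)) (h : (b:ℕ) = (a:ℕ) + 1) :
    (Gn n).Adj (Sum.inl a) (Sum.inl b) := by
  rw [Gn, SimpleGraph.fromRel_adj]
  refine ⟨?_, Or.inl h⟩
  intro hc
  injection hc with hc
  rw [hc] at h
  omega

lemma adj_gadget {n : ℕ} (i : Fin n) (b : Bool) (c : Fin (3*n+4))
    (h : (c:ℕ) = 3*(i:ℕ)+3 ∨ (c:ℕ) = (if b then 3*(i:ℕ)+4 else 3*(i:ℕ)+2)) :
    (Gn n).Adj (Sum.inr (i, b)) (Sum.inl c) := by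
  rw [Gn, SimpleGraph.fromRel_adj]
  refine ⟨by simp, Or.inl ?_⟩
  cases b <;> simpa [rel] using h

lemma reach_path {n : ℕ} : ∀ (k : ℕ) (h : k < 3*n+4),
    (Gn n).Reachable (pv n 0 (by omega)) (Sum.inl ⟨k, h⟩) := by
  intro k
  induction k with
  | zero => intro h; exact SimpleGraph.Reachable.refl _
  | succ k ih =>
      intro h
      exact (ih (by omega)).trans (adj_path ⟨k, by omega⟩ ⟨k+1, h⟩ rfl).reachable

lemma reach_all {n : ℕ} : ∀ v : Vn n, (Gn n).Reachable (pv n 0 (by omega)) v := by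
  intro v
  rcases v with a | ⟨i, b⟩
  · have := reach_path (n := n) (a : ℕ) a.isLt
    simpa using this
  · have h3 : 3*(i:ℕ)+3 < 3*n+4 := by have := i.isLt; omega
    exact (reach_path _ h3).trans
      ((adj_gadget i b ⟨3*(i:ℕ)+3, h3⟩ (Or.inl rfl)).symm.reachable).symm.symm

lemma conn (n : ℕ) : (Gn n).Connected := by
  rw [SimpleGraph.connected_iff]
  exact ⟨fun u v => (reach_all u).symm.trans (reach_all v), ⟨pv n 0 (by omega)⟩⟩

lemma dist_le_one_of_adj {n : ℕ} {u v : Vn n} (h : (Gn n).Adj u v) : (Gn n).dist u v ≤ 1 := by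
  have := SimpleGraph.dist_le h.toWalk
  simpa using this

lemma dist_lb0 {n : ℕ} (v : Vn n) : f0 n v ≤ (Gn n).dist (pv n 0 (by omega)) v := by
  obtain ⟨p, hp⟩ := ((conn n) (pv n 0 (by omega)) v).exists_walk_length_eq_dist
  have := f_le_walk (f0 n) (fun h => lip0 n h) p
  have h0 : f0 n (pv n 0 (by omega)) = 0 := rfl
  omega

lemma dist_lbm {n : ℕ} (v : Vn n) : fm n v ≤ (Gn n).dist (pv n (3*n+3) (by omega)) v := by
  obtain ⟨p, hp⟩ := ((conn n) (pv n (3*n+3) (by omega)) v).exists_walk_length_eq_dist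
  have := f_le_walk (fm n) (fun h => lipm n h) p
  have h0 : fm n (pv n (3*n+3) (by omega)) = 0 := by
    simp [fm, pv]
  omega


lemma dist_ub0_path {n : ℕ} : ∀ (k : ℕ) (h : k < 3*n+4),
    (Gn n).dist (pv n 0 (by omega)) (Sum.inl ⟨k, h⟩) ≤ k := by
  intro k
  induction k with
  | zero => intro h; simp [pv]
  | succ k ih =>
      intro h
      have htri := (conn n).dist_triangle (u := pv n 0 (by omega))
        (v := Sum.inl ⟨k, by omega⟩) (w := Sum.inl ⟨k+1, h⟩)
      have hadj := dist_le_one_of_adj (adj_path (n := n) ⟨k, by omega⟩ ⟨k+1, h⟩ rfl)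
      exact htri.trans (Nat.add_le_add (ih (by omega)) hadj)

lemma dist_ubm_path {n : ℕ} : ∀ (k : ℕ), k ≤ 3*n+3 → ∀ (h' : 3*n+3-k < 3*n+4),
    (Gn n).dist (pv n (3*n+3) (by omega)) (Sum.inl ⟨3*n+3-k, h'⟩) ≤ k := by
  intro k
  induction k with
  | zero => intro _ h'; simp [pv]
  | succ k ih =>
      intro hk h'
      have htri := (conn n).dist_triangle (u := pv n (3*n+3) (by omega))
        (v := Sum.inl ⟨3*n+3-k, by omega⟩) (w := Sum.inl ⟨3*n+3-(k+1), h'⟩)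
      have hadj := dist_le_one_of_adj
        ((adj_path (n := n) ⟨3*n+3-(k+1), h'⟩ ⟨3*n+3-k, by omega⟩ (by simp; omega)).symm)
      exact htri.trans (Nat.add_le_add (ih (by omega) (by omega)) hadj)

/-- distance upper bound from `p_0` via a neighbour `p_q` of a gadget vertex. -/
lemma dist_ub_gadget {n : ℕ} {d₀ : ℕ} (z : Vn n) (q : ℕ) (hq : q < 3*n+4)
    (hadj : (Gn n).Adj (Sum.inl ⟨q, hq⟩) z) (w : Vn n)
    (hpath : (Gn n).dist w (Sum.inl ⟨q, hq⟩) ≤ d₀) :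
    (Gn n).dist w z ≤ d₀ + 1 := by
  have htri := (conn n).dist_triangle (u := w) (v := Sum.inl ⟨q, hq⟩) (w := z)
  have h1 := dist_le_one_of_adj hadj
  omega

lemma dist0 {n : ℕ} (v : Vn n) : (Gn n).dist (pv n 0 (by omega)) v = f0 n v := by
  refine le_antisymm ?_ (dist_lb0 v)
  rcases v with a | ⟨i, (_|_)⟩
  · have := dist_ub0_path (n := n) (a : ℕ) a.isLt
    simpa [f0] using this
  · -- y_i : distance 3i+3 via p_{3i+2}
    have hi := i.isLt
    have hq : 3*(i:ℕ)+2 < 3*n+4 := by omega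
    have := dist_ub_gadget (Sum.inr (i, false)) (3*(i:ℕ)+2) hq
      ((adj_gadget i false ⟨3*(i:ℕ)+2, hq⟩ (by simp)).symm)
      (pv n 0 (by omega)) (dist_ub0_path _ hq)
    simpa [f0] using this
  · -- x_i : distance 3i+4 via p_{3i+3}
    have hi := i.isLt
    have hq : 3*(i:ℕ)+3 < 3*n+4 := by omega
    have := dist_ub_gadget (Sum.inr (i, true)) (3*(i:ℕ)+3) hq
      ((adj_gadget i true ⟨3*(i:ℕ)+3, hq⟩ (by simp)).symm)
      (pv n 0 (by omega)) (dist_ub0_path _ hq)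
    simpa [f0] using this

lemma distm_path_le {n : ℕ} (a : ℕ) (ha : a < 3*n+4) :
    (Gn n).dist (pv n (3*n+3) (by omega)) (Sum.inl ⟨a, ha⟩) ≤ 3*n+3-a := by
  have h := dist_ubm_path (n := n) (3*n+3-a) (by omega) (by omega)
  have hval : (⟨3*n+3-(3*n+3-a), by omega⟩ : Fin (3*n+4)) = ⟨a, ha⟩ := by
    apply Fin.ext; simp; omega
  rwa [hval] at h

lemma distm {n : ℕ} (v : Vn n) : (Gn n).dist (pv n (3*n+3) (by omega)) v = fm n v := by
  refine le_antisymm ?_ (dist_lbm v)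
  rcases v with a | ⟨i, (_|_)⟩
  · have ha := a.isLt
    have h := distm_path_le (n := n) (a : ℕ) ha
    have hval : (⟨(a : ℕ), ha⟩ : Fin (3*n+4)) = a := by apply Fin.ext; simp
    rw [hval] at h
    simpa [fm] using h
  · -- y_i : via p_{3i+3}, distance (3n-3i)+1
    have hi := i.isLt
    have hq : 3*(i:ℕ)+3 < 3*n+4 := by omega
    have := dist_ub_gadget (Sum.inr (i, false)) (3*(i:ℕ)+3) hq
      ((adj_gadget i false ⟨3*(i:ℕ)+3, hq⟩ (by simp)).symm)
      (pv n (3*n+3) (by omega)) (distm_path_le _ hq)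
    have hfm : fm n (Sum.inr (i, false)) = 3*n - 3*(i:ℕ) + 1 := rfl
    rw [hfm]
    have harith : 3*n+3-(3*(i:ℕ)+3) = 3*n - 3*(i:ℕ) := by omega
    rw [harith] at this
    exact this
  · -- x_i : via p_{3i+4}, distance 3n-3i
    have hi := i.isLt
    have hq : 3*(i:ℕ)+4 < 3*n+4 := by omega
    have := dist_ub_gadget (Sum.inr (i, true)) (3*(i:ℕ)+4) hq
      ((adj_gadget i true ⟨3*(i:ℕ)+4, hq⟩ (by simp)).symm)
      (pv n (3*n+3) (by omega)) (distm_path_le _ hq)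
    have hfm : fm n (Sum.inr (i, true)) = 3*n - 3*(i:ℕ) := rfl
    rw [hfm]
    have harith : 3*n+3-(3*(i:ℕ)+4)+1 = 3*n - 3*(i:ℕ) := by omega
    rw [harith] at this
    exact this


/-! ### Vertex resolving -/

lemma vec_inj {n : ℕ} (u v : Vn n) (h0 : f0 n u = f0 n v) (hm : fm n u = fm n v) : u = v := by
  rcases u with a | ⟨i, (_|_)⟩ <;> rcases v with c | ⟨j, (_|_)⟩ <;>
    simp only [f0, fm] at h0 hm <;>
    first
      | (congr 1; apply Fin.ext; omega)
      | (have := a.isLt; have := j.isLt; omega)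
      | (have := c.isLt; have := i.isLt; omega)
      | (have := i.isLt; have := j.isLt; omega)
      | (rw [show i = j from Fin.ext (by omega)])

def S2 (n : ℕ) : Finset (Vn n) := {pv n 0 (by omega), pv n (3*n+3) (by omega)}

lemma isres (n : ℕ) : IsResolvingSet (Gn n) ↑(S2 n) := by
  intro u v hne
  by_cases h : (Gn n).dist u (pv n 0 (by omega)) = (Gn n).dist v (pv n 0 (by omega))
  · refine ⟨pv n (3*n+3) (by omega), by simp [S2], ?_⟩
    intro hc
    apply hne
    refine vec_inj u v ?_ ?_
    · rw [← dist0, ← dist0, SimpleGraph.dist_comm, h, SimpleGraph.dist_comm]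
    · rw [← distm, ← distm, SimpleGraph.dist_comm, hc, SimpleGraph.dist_comm]
  · exact ⟨pv n 0 (by omega), by simp [S2], h⟩

lemma S2_card (n : ℕ) : (S2 n).card = 2 := by
  rw [S2, Finset.card_insert_of_notMem, Finset.card_singleton]
  simp [pv, Fin.ext_iff]

lemma not_res_small {n : ℕ} (hn : 1 ≤ n) (S : Finset (Vn n)) (hcard : S.card ≤ 1) :
    ¬ IsResolvingSet (Gn n) ↑S := by
  intro hres
  have h2 : (2:ℕ) < 3*n+4 := by omega
  have h3 : (3:ℕ) < 3*n+4 := by omega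
  have h4 : (4:ℕ) < 3*n+4 := by omega
  set i0 : Fin n := ⟨0, hn⟩ with hi0
  set hub : Vn n := pv n 3 h3 with hhub
  set v1 : Vn n := Sum.inr (i0, true) with hv1
  set v2 : Vn n := Sum.inr (i0, false) with hv2
  set v3 : Vn n := pv n 2 h2 with hv3
  set v4 : Vn n := pv n 4 h4 with hv4
  -- adjacency of each vᵢ to the hub p₃
  have a1 : (Gn n).Adj hub v1 := (adj_gadget i0 true ⟨3, h3⟩ (by simp [hi0])).symm
  have a2 : (Gn n).Adj hub v2 := (adj_gadget i0 false ⟨3, h3⟩ (by simp [hi0])).symm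
  have a3 : (Gn n).Adj hub v3 := (adj_path ⟨2, h2⟩ ⟨3, h3⟩ (by simp)).symm
  have a4 : (Gn n).Adj hub v4 := adj_path ⟨3, h3⟩ ⟨4, h4⟩ (by simp)
  -- get the single landmark
  obtain ⟨w, hwS, h12⟩ := hres v1 v2 (by simp [hv1, hv2])
  have huniq : ∀ w' ∈ S, w' = w := fun w' hw' => Finset.card_le_one.mp hcard w' hw' w hwS
  have get : ∀ u v : Vn n, u ≠ v → (Gn n).dist u w ≠ (Gn n).dist v w := by
    intro u v huv
    obtain ⟨w', hw', hd⟩ := hres u v huv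
    rwa [huniq w' hw'] at hd
  have h13 := get v1 v3 (by simp [hv1, hv3, pv])
  have h14 := get v1 v4 (by simp [hv1, hv4, pv])
  have h23 := get v2 v3 (by simp [hv2, hv3, pv])
  have h24 := get v2 v4 (by simp [hv2, hv4, pv])
  have h34 := get v3 v4 (by simp [hv3, hv4, pv, Fin.ext_iff])
  -- distance window bounds
  have bound : ∀ v : Vn n, (Gn n).Adj hub v →
      (Gn n).dist v w ≤ (Gn n).dist hub w + 1 ∧ (Gn n).dist hub w ≤ (Gn n).dist v w + 1 := by
    intro v hadj
    have t1 := (conn n).dist_triangle (u := v) (v := hub) (w := w)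
    have t2 := (conn n).dist_triangle (u := hub) (v := v) (w := w)
    have e1 := dist_le_one_of_adj hadj
    have e2 := dist_le_one_of_adj hadj.symm
    omega
  have b1 := bound v1 a1
  have b2 := bound v2 a2
  have b3 := bound v3 a3
  have b4 := bound v4 a4
  omega

lemma metricDim_eq_two {n : ℕ} (hn : 1 ≤ n) : metricDim (Gn n) = 2 := by
  have h2mem : 2 ∈ {k | ∃ S : Finset (Vn n), IsResolvingSet (Gn n) ↑S ∧ S.card = k} :=
    ⟨S2 n, isres n, S2_card n⟩
  refine le_antisymm (Nat.sInf_le h2mem) ?_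
  obtain ⟨S, hres, hcard⟩ := Nat.sInf_mem (⟨2, h2mem⟩ :
    Set.Nonempty {k | ∃ S : Finset (Vn n), IsResolvingSet (Gn n) ↑S ∧ S.card = k})
  rw [metricDim, ← hcard]
  by_contra h
  exact not_res_small hn S (by omega) hres

/-! ### Edge resolving -/

lemma edgeDist_mk {n : ℕ} (a b w : Vn n) :
    edgeDist (Gn n) s(a, b) w = min ((Gn n).dist a w) ((Gn n).dist b w) := rfl

lemma dist_hub_le {n : ℕ} {x u : Vn n}
    (hx : ∀ s, (Gn n).Adj x s → (Gn n).Adj u s ∨ s = u) {w : Vn n} (hw : w ≠ x) :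
    (Gn n).dist w u ≤ (Gn n).dist w x := by
  obtain ⟨p, hp⟩ := ((conn n) x w).exists_walk_length_eq_dist
  cases p with
  | nil => exact absurd rfl (Ne.symm hw)
  | @cons _ s _ h q =>
      have h1 : (Gn n).dist w s ≤ q.length := by
        have := SimpleGraph.dist_le q.reverse
        rwa [SimpleGraph.Walk.length_reverse] at this
      have hp' : q.length + 1 = (Gn n).dist x w := by simpa using hp
      have hcomm : (Gn n).dist w x = (Gn n).dist x w := SimpleGraph.dist_comm
      rcases hx s h with hadj | rfl
      · have htri := (conn n).dist_triangle (u := w) (v := s) (w := u)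
        have hsu : (Gn n).dist s u ≤ 1 := dist_le_one_of_adj hadj.symm
        omega
      · omega

def xv {n : ℕ} (i : Fin n) : Vn n := Sum.inr (i, true)
def yv {n : ℕ} (i : Fin n) : Vn n := Sum.inr (i, false)

lemma hub_lt {n : ℕ} (i : Fin n) : 3*(i:ℕ)+3 < 3*n+4 := by have := i.isLt; omega

def hubv {n : ℕ} (i : Fin n) : Vn n := Sum.inl ⟨3*(i:ℕ)+3, hub_lt i⟩

lemma hub_dom_x {n : ℕ} (i : Fin n) :
    ∀ s, (Gn n).Adj (xv i) s → (Gn n).Adj (hubv i) s ∨ s = hubv i := by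
  intro s hs
  rw [Gn, SimpleGraph.fromRel_adj] at hs
  obtain ⟨hne, h⟩ := hs
  rcases s with c | ⟨j, b⟩
  · simp only [xv, rel] at h
    rcases h with (h | h) | h
    · right; simp only [hubv]; congr 1; apply Fin.ext; simp [h]
    · left; exact adj_path ⟨3*(i:ℕ)+3, hub_lt i⟩ c (by simp; omega)
    · exact h.elim
  · simp only [xv, rel] at h
    rcases h with h | h <;> exact h.elim

lemma hub_dom_y {n : ℕ} (i : Fin n) :
    ∀ s, (Gn n).Adj (yv i) s → (Gn n).Adj (hubv i) s ∨ s = hubv i := by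
  intro s hs
  rw [Gn, SimpleGraph.fromRel_adj] at hs
  obtain ⟨hne, h⟩ := hs
  rcases s with c | ⟨j, b⟩
  · simp only [yv, rel] at h
    rcases h with (h | h) | h
    · right; simp only [hubv]; congr 1; apply Fin.ext; simp [h]
    · left; exact (adj_path c ⟨3*(i:ℕ)+3, hub_lt i⟩ (by simp; omega)).symm
    · exact h.elim
  · simp only [yv, rel] at h
    rcases h with h | h <;> exact h.elim

lemma edge_res_lb {n : ℕ} (S : Finset (Vn n)) (hS : IsEdgeResolvingSet (Gn n) ↑S) :
    n ≤ S.card := by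
  have key : ∀ i : Fin n, ∃ w ∈ S, w = xv i ∨ w = yv i := by
    intro i
    have hax : (Gn n).Adj (hubv i) (xv i) :=
      (adj_gadget i true ⟨3*(i:ℕ)+3, hub_lt i⟩ (Or.inl rfl)).symm
    have hay : (Gn n).Adj (hubv i) (yv i) :=
      (adj_gadget i false ⟨3*(i:ℕ)+3, hub_lt i⟩ (Or.inl rfl)).symm
    have he : s(hubv i, xv i) ∈ (Gn n).edgeSet := hax
    have hf : s(hubv i, yv i) ∈ (Gn n).edgeSet := hay
    have hnef : s(hubv i, xv i) ≠ s(hubv i, yv i) := by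
      rw [Ne, Sym2.congr_right]
      simp [xv, yv]
    obtain ⟨w, hwS, hd⟩ := hS _ he _ hf hnef
    refine ⟨w, hwS, ?_⟩
    by_contra hcon
    push_neg at hcon
    apply hd
    rw [edgeDist_mk, edgeDist_mk]
    have dx : (Gn n).dist w (hubv i) ≤ (Gn n).dist w (xv i) := dist_hub_le (hub_dom_x i) hcon.1
    have dy : (Gn n).dist w (hubv i) ≤ (Gn n).dist w (yv i) := dist_hub_le (hub_dom_y i) hcon.2
    have c1 : (Gn n).dist (hubv i) w = (Gn n).dist w (hubv i) := SimpleGraph.dist_comm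
    have c2 : (Gn n).dist (xv i) w = (Gn n).dist w (xv i) := SimpleGraph.dist_comm
    have c3 : (Gn n).dist (yv i) w = (Gn n).dist w (yv i) := SimpleGraph.dist_comm
    omega
  choose g hg1 hg2 using key
  have hinj : Set.InjOn g ↑(Finset.univ : Finset (Fin n)) := by
    intro i _ j _ hij
    rcases hg2 i with hi | hi <;> rcases hg2 j with hj | hj <;>
      rw [hi, hj] at hij <;>
      simp only [xv, yv, Sum.inr.injEq, Prod.mk.injEq] at hij
    · exact hij.1
    · exact absurd hij.2 (by simp)
    · exact absurd hij.2 (by simp)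
    · exact hij.1
  have := Finset.card_le_card_of_injOn g (fun i _ => hg1 i) hinj
  simpa using this

lemma univ_edge_res (n : ℕ) : IsEdgeResolvingSet (Gn n) ↑(Finset.univ : Finset (Vn n)) := by
  intro e he f hf hne
  induction e using Sym2.ind with | _ a b =>
  induction f using Sym2.ind with | _ c d =>
  have hab : (Gn n).Adj a b := he
  have hcd : (Gn n).Adj c d := hf
  have key : (a ≠ c ∧ a ≠ d) ∨ (b ≠ c ∧ b ≠ d) := by
    by_contra hc
    push_neg at hc
    obtain ⟨h1, h2⟩ := hc
    apply hne
    rw [Sym2.eq_iff]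
    by_cases hac : a = c
    · by_cases hbd : b = d
      · exact Or.inl ⟨hac, hbd⟩
      · have hbc : b = c := by
          by_contra hbc
          exact hbd (h2 hbc)
        exact absurd (hac.trans hbc.symm) hab.ne
    · have had : a = d := h1 hac
      by_cases hbc : b = c
      · exact Or.inr ⟨had, hbc⟩
      · have hbd : b = d := h2 hbc
        exact absurd (had.trans hbd.symm) hab.ne
  have dself : ∀ v : Vn n, (Gn n).dist v v = 0 := fun v => SimpleGraph.dist_self
  rcases key with ⟨h1, h2⟩ | ⟨h1, h2⟩
  · refine ⟨a, by simp, ?_⟩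
    rw [edgeDist_mk, edgeDist_mk]
    have p1 : 0 < (Gn n).dist c a := (conn n).pos_dist_of_ne (Ne.symm h1)
    have p2 : 0 < (Gn n).dist d a := (conn n).pos_dist_of_ne (Ne.symm h2)
    have := dself a
    omega
  · refine ⟨b, by simp, ?_⟩
    rw [edgeDist_mk, edgeDist_mk]
    have p1 : 0 < (Gn n).dist c b := (conn n).pos_dist_of_ne (Ne.symm h1)
    have p2 : 0 < (Gn n).dist d b := (conn n).pos_dist_of_ne (Ne.symm h2)
    have := dself b
    omega

lemma edgeMetricDim_ge {n : ℕ} : n ≤ edgeMetricDim (Gn n) := by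
  have hmem : (Finset.univ : Finset (Vn n)).card ∈
      {k | ∃ S : Finset (Vn n), IsEdgeResolvingSet (Gn n) ↑S ∧ S.card = k} :=
    ⟨Finset.univ, univ_edge_res n, rfl⟩
  obtain ⟨S, hres, hcard⟩ := Nat.sInf_mem (⟨_, hmem⟩ :
    Set.Nonempty {k | ∃ S : Finset (Vn n), IsEdgeResolvingSet (Gn n) ↑S ∧ S.card = k})
  rw [edgeMetricDim, ← hcard]
  exact edge_res_lb S hres

end S17

/-- for every `N` there is a finite connected graph with metric
dimension exactly 2 and edge metric dimension at least `N`; consequently no function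
`f` satisfies `edim(G) ≤ f(dim G)` for all finite connected graphs `G`. -/
theorem statement17 :
    (∀ N : ℕ, ∃ (V : Type) (_ : Fintype V) (G : SimpleGraph V), G.Connected ∧
      metricDim G = 2 ∧ N ≤ edgeMetricDim G) ∧
    ¬ ∃ f : ℕ → ℕ, ∀ (V : Type) [Fintype V], ∀ G : SimpleGraph V, G.Connected →
      edgeMetricDim G ≤ f (metricDim G) := by
  have main : ∀ N : ℕ, ∃ (V : Type) (_ : Fintype V) (G : SimpleGraph V), G.Connected ∧
      metricDim G = 2 ∧ N ≤ edgeMetricDim G := by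
    intro N
    refine ⟨S17.Vn (max N 1), inferInstance, S17.Gn (max N 1), S17.conn _,
      S17.metricDim_eq_two (le_max_right N 1), ?_⟩
    exact le_trans (le_max_left N 1) S17.edgeMetricDim_ge
  refine ⟨main, ?_⟩
  rintro ⟨f, hf⟩
  obtain ⟨V, inst, G, hconn, hdim, hedim⟩ := main (f 2 + 1)
  have := hf V G hconn
  rw [hdim] at this
  omega
end

section
/- For all integers d ≥ 1 and n ≥ 2 with n ≥ d^{d−1}, the metric dimension of the d-dimensional grid P_n^d equals d. -/
open SimpleGraph

/-- The `d`-dimensional grid `P_n^d` on vertex set `{0,...,n-1}^d`: two vertices are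
adjacent iff they agree in all but one coordinate, in which they differ by exactly 1. -/
def gridGraph (n d : ℕ) : SimpleGraph (Fin d → Fin n) where
  Adj x y := ∃ i, ((x i : ℕ) + 1 = (y i : ℕ) ∨ (y i : ℕ) + 1 = (x i : ℕ)) ∧
    ∀ j, j ≠ i → x j = y j
  symm := by
    refine ⟨?_⟩
    rintro x y ⟨i, hi, hj⟩
    exact ⟨i, hi.symm, fun j h => (hj j h).symm⟩
  loopless := by
    refine ⟨?_⟩
    rintro x ⟨i, hi, _⟩
    rcases hi with h | h <;> omega

namespace GridAux

variable {n d : ℕ}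

def l1 (u v : Fin d → Fin n) : ℕ := ∑ i, (((u i : ℕ) : ℤ) - ((v i : ℕ) : ℤ)).natAbs

lemma l1_self (u : Fin d → Fin n) : l1 u u = 0 := by
  simp [l1]

lemma adj_l1 {u v : Fin d → Fin n} (h : (gridGraph n d).Adj u v) : l1 u v = 1 := by
  obtain ⟨i, hi, hj⟩ := h
  rw [l1, ← Finset.add_sum_erase _ _ (Finset.mem_univ i)]
  have hz : ∑ j ∈ Finset.univ.erase i, (((u j : ℕ) : ℤ) - ((v j : ℕ) : ℤ)).natAbs = 0 :=
    Finset.sum_eq_zero fun j hj' => by rw [hj j (Finset.mem_erase.1 hj').1]; simp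
  rw [hz]
  omega

lemma l1_triangle (u w v : Fin d → Fin n) : l1 u v ≤ l1 u w + l1 w v := by
  rw [l1, l1, l1, ← Finset.sum_add_distrib]
  exact Finset.sum_le_sum fun i _ => by omega

lemma walk_le {u v : Fin d → Fin n} (p : (gridGraph n d).Walk u v) : l1 u v ≤ p.length := by
  induction p with
  | nil => simp [l1_self]
  | @cons a b c h q ih =>
    calc l1 a c ≤ l1 a b + l1 b c := l1_triangle a b c
    _ ≤ 1 + q.length := by have := adj_l1 h; omega
    _ = (SimpleGraph.Walk.cons h q).length := by simp [SimpleGraph.Walk.length_cons]; omega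

lemma exists_walk_aux : ∀ (N : ℕ) (u v : Fin d → Fin n), l1 u v = N →
    ∃ p : (gridGraph n d).Walk u v, p.length = N := by
  intro N
  induction N with
  | zero =>
    intro u v h
    have : u = v := by
      funext i
      have := (Finset.sum_eq_zero_iff.1 h) i (Finset.mem_univ i)
      exact Fin.val_injective (by omega)
    subst this
    exact ⟨SimpleGraph.Walk.nil, rfl⟩
  | succ N ih =>
    intro u v h
    have hne : ∃ i, (u i : ℕ) ≠ (v i : ℕ) := by
      by_contra hc
      push_neg at hc
      have : l1 u v = 0 := Finset.sum_eq_zero fun i _ => by rw [hc i]; simp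
      omega
    obtain ⟨i, hi⟩ := hne
    rcases Nat.lt_or_ge (u i : ℕ) (v i : ℕ) with hlt | hge
    · have hlt' : (u i : ℕ) + 1 < n := by have := (v i).isLt; omega
      set c : Fin n := ⟨(u i : ℕ) + 1, hlt'⟩ with hc
      set u' : Fin d → Fin n := Function.update u i c with hu'
      have hui : (u' i : ℕ) = (u i : ℕ) + 1 := by simp [hu', hc]
      have hrest : ∀ j, j ≠ i → u' j = u j := fun j hj => Function.update_of_ne hj _ _
      have hadj : (gridGraph n d).Adj u u' := ⟨i, Or.inl (by omega), fun j hj => (hrest j hj).symm⟩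
      have hl1 : l1 u' v = N := by
        rw [l1, ← Finset.add_sum_erase _ _ (Finset.mem_univ i)]
        rw [l1, ← Finset.add_sum_erase _ _ (Finset.mem_univ i)] at h
        have he : ∑ j ∈ Finset.univ.erase i, (((u' j : ℕ) : ℤ) - ((v j : ℕ) : ℤ)).natAbs
            = ∑ j ∈ Finset.univ.erase i, (((u j : ℕ) : ℤ) - ((v j : ℕ) : ℤ)).natAbs :=
          Finset.sum_congr rfl fun j hj => by rw [hrest j (Finset.mem_erase.1 hj).1]
        rw [he, hui]
        omega
      obtain ⟨p, hp⟩ := ih u' v hl1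
      exact ⟨SimpleGraph.Walk.cons hadj p, by simp [hp]⟩
    · have hgt : (v i : ℕ) < (u i : ℕ) := by omega
      have hlt' : (u i : ℕ) - 1 < n := by have := (u i).isLt; omega
      set c : Fin n := ⟨(u i : ℕ) - 1, hlt'⟩ with hc
      set u' : Fin d → Fin n := Function.update u i c with hu'
      have hui : (u' i : ℕ) = (u i : ℕ) - 1 := by simp [hu', hc]
      have hrest : ∀ j, j ≠ i → u' j = u j := fun j hj => Function.update_of_ne hj _ _
      have hadj : (gridGraph n d).Adj u u' := ⟨i, Or.inr (by omega), fun j hj => (hrest j hj).symm⟩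
      have hl1 : l1 u' v = N := by
        rw [l1, ← Finset.add_sum_erase _ _ (Finset.mem_univ i)]
        rw [l1, ← Finset.add_sum_erase _ _ (Finset.mem_univ i)] at h
        have he : ∑ j ∈ Finset.univ.erase i, (((u' j : ℕ) : ℤ) - ((v j : ℕ) : ℤ)).natAbs
            = ∑ j ∈ Finset.univ.erase i, (((u j : ℕ) : ℤ) - ((v j : ℕ) : ℤ)).natAbs :=
          Finset.sum_congr rfl fun j hj => by rw [hrest j (Finset.mem_erase.1 hj).1]
        rw [he, hui]
        omega
      obtain ⟨p, hp⟩ := ih u' v hl1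
      exact ⟨SimpleGraph.Walk.cons hadj p, by simp [hp]⟩

lemma grid_dist_eq (u v : Fin d → Fin n) : (gridGraph n d).dist u v = l1 u v := by
  obtain ⟨p, hp⟩ := exists_walk_aux (l1 u v) u v rfl
  refine le_antisymm (hp ▸ SimpleGraph.dist_le p) ?_
  obtain ⟨q, hq⟩ := (Reachable.exists_walk_length_eq_dist (Nonempty.intro p : (gridGraph n d).Reachable u v))
  rw [← hq]
  exact walk_le q

lemma l1_le (u v : Fin d → Fin n) : l1 u v ≤ d * (n - 1) := by
  rw [l1]
  calc ∑ i, (((u i : ℕ) : ℤ) - ((v i : ℕ) : ℤ)).natAbs ≤ ∑ _i : Fin d, (n - 1) :=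
        Finset.sum_le_sum fun i _ => by have := (u i).isLt; have := (v i).isLt; omega
  _ = d * (n - 1) := by simp [Finset.sum_const, mul_comm]

end GridAux

namespace GridAux

variable {n d : ℕ}

def lm (n : ℕ) (hn : 0 < n) {d : ℕ} (j : Fin d) : Fin d → Fin n :=
  fun i => if i = j ∧ (j : ℕ) ≠ 0 then ⟨n - 1, by omega⟩ else ⟨0, hn⟩

lemma lm_inj (hn2 : 2 ≤ n) (hn : 0 < n) : Function.Injective (lm n hn (d := d)) := by
  intro j k hjk
  by_contra hne
  by_cases hj : (j : ℕ) = 0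
  · have hk : (k : ℕ) ≠ 0 := fun hk0 => hne (Fin.val_injective (by omega))
    have := congrFun hjk k
    have h1 : (lm n hn j k : ℕ) = 0 := by
      simp [lm, hj]
    have h2 : (lm n hn k k : ℕ) = n - 1 := by
      simp [lm, hk]
    rw [this] at h1
    omega
  · have := congrFun hjk j
    have h1 : (lm n hn j j : ℕ) = n - 1 := by simp [lm, hj]
    have h2 : (lm n hn k j : ℕ) = 0 := by
      have : ¬(j = k) := hne
      simp [lm, this]
    rw [this] at h1
    omega

lemma l1_lm (hn : 0 < n) (u : Fin d → Fin n) (j : Fin d) :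
    (l1 u (lm n hn j) : ℤ) = (∑ i, ((u i : ℕ) : ℤ)) +
      (if (j : ℕ) = 0 then 0 else ((n : ℤ) - 1) - 2 * ((u j : ℕ) : ℤ)) := by
  rw [l1, Nat.cast_sum]
  by_cases h0 : (j : ℕ) = 0
  · rw [if_pos h0, add_zero]
    refine Finset.sum_congr rfl fun i _ => ?_
    have hz : (lm n hn j i : ℕ) = 0 := by simp [lm, h0]
    rw [hz]
    omega
  · rw [if_neg h0]
    rw [← Finset.add_sum_erase _ (fun i => ((((u i : ℕ) : ℤ) - ((lm n hn j i : ℕ) : ℤ)).natAbs : ℤ))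
      (Finset.mem_univ j)]
    rw [← Finset.add_sum_erase _ (fun i => ((u i : ℕ) : ℤ)) (Finset.mem_univ j)]
    have hrest : ∑ i ∈ Finset.univ.erase j,
        ((((u i : ℕ) : ℤ) - ((lm n hn j i : ℕ) : ℤ)).natAbs : ℤ)
        = ∑ i ∈ Finset.univ.erase j, ((u i : ℕ) : ℤ) := by
      refine Finset.sum_congr rfl fun i hi => ?_
      have hz : (lm n hn j i : ℕ) = 0 := by simp [lm, (Finset.mem_erase.1 hi).1]
      rw [hz]
      omega
    rw [hrest]
    have hz2 : (lm n hn j j : ℕ) = n - 1 := by simp [lm, h0]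
    rw [hz2]
    have := (u j).isLt
    omega

lemma lm_resolves (hd : 1 ≤ d) (hn2 : 2 ≤ n) (hn : 0 < n) :
    IsResolvingSet (gridGraph n d) ↑(Finset.image (lm n hn) (Finset.univ : Finset (Fin d))) := by
  intro u v huv
  by_contra hc
  push_neg at hc
  have hall : ∀ j : Fin d, (l1 u (lm n hn j) : ℤ) = (l1 v (lm n hn j) : ℤ) := fun j => by
    have := hc (lm n hn j) (Finset.mem_coe.2 (Finset.mem_image_of_mem _ (Finset.mem_univ j)))
    rw [grid_dist_eq, grid_dist_eq] at this
    exact_mod_cast this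
  have hZ : ∀ j : Fin d, (l1 u (lm n hn j) : ℤ) = (l1 v (lm n hn j) : ℤ) := hall
  have j0 : Fin d := ⟨0, hd⟩
  have hsum : ∑ i, ((u i : ℕ) : ℤ) = ∑ i, ((v i : ℕ) : ℤ) := by
    have := hZ ⟨0, hd⟩
    rw [l1_lm hn, l1_lm hn] at this
    simpa using this
  have hco : ∀ j : Fin d, (j : ℕ) ≠ 0 → (u j : ℕ) = (v j : ℕ) := fun j hj => by
    have := hZ j
    rw [l1_lm hn, l1_lm hn, if_neg hj, if_neg hj, hsum] at this
    omega
  apply huv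
  funext i
  by_cases hi : (i : ℕ) = 0
  · have hsplit : ∀ w : Fin d → Fin n, ∑ k, ((w k : ℕ) : ℤ) =
        ((w i : ℕ) : ℤ) + ∑ k ∈ Finset.univ.erase i, ((w k : ℕ) : ℤ) :=
      fun w => (Finset.add_sum_erase _ _ (Finset.mem_univ i)).symm
    have hrest : ∑ k ∈ Finset.univ.erase i, ((u k : ℕ) : ℤ)
        = ∑ k ∈ Finset.univ.erase i, ((v k : ℕ) : ℤ) := by
      refine Finset.sum_congr rfl fun k hk => ?_
      have hki : k ≠ i := (Finset.mem_erase.1 hk).1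
      have hk0 : (k : ℕ) ≠ 0 := fun h => hki (Fin.val_injective (by omega))
      exact_mod_cast hco k hk0
    have := hsum
    rw [hsplit u, hsplit v, hrest] at this
    exact Fin.val_injective (by omega)
  · exact Fin.val_injective (hco i hi)

lemma lower_bound (hd : 1 ≤ d) (hn2 : 2 ≤ n) (h : d ^ (d - 1) ≤ n)
    (S : Finset (Fin d → Fin n)) (hS : IsResolvingSet (gridGraph n d) ↑S) : d ≤ S.card := by
  by_contra hlt
  push_neg at hlt
  have hMpos : 0 < d * (n - 1) + 1 := by omega
  let φ : (Fin d → Fin n) → (↥S → Fin (d * (n - 1) + 1)) := fun x w =>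
    ⟨(gridGraph n d).dist x w, by
      rw [grid_dist_eq]
      have := l1_le x (w : Fin d → Fin n)
      omega⟩
  have hinj : Function.Injective φ := by
    intro x y hxy
    by_contra hne
    obtain ⟨w, hw, hne'⟩ := hS x y hne
    exact hne' (congrArg Fin.val (congrFun hxy ⟨w, hw⟩))
  have hcard := Fintype.card_le_of_injective φ hinj
  simp only [Fintype.card_fun, Fintype.card_coe, Fintype.card_fin] at hcard
  -- hcard : n ^ d ≤ (d * (n - 1) + 1) ^ S.card
  have h1 : (d * (n - 1) + 1) ^ S.card ≤ (d * (n - 1) + 1) ^ (d - 1) :=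
    Nat.pow_le_pow_right hMpos (by omega)
  rcases eq_or_lt_of_le hd with h2 | h2
  · -- d = 1
    have hd1 : d = 1 := h2.symm
    subst hd1
    have : S.card = 0 := by omega
    rw [this] at hcard
    simp at hcard
    omega
  · -- d ≥ 2
    have hmul : d * (n - 1) + d = d * n := by
      have : n - 1 + 1 = n := by omega
      rw [← Nat.mul_succ]
      rw [Nat.succ_eq_add_one, this]
    have hM : d * (n - 1) + 1 < d * n := by omega
    have h3 : (d * (n - 1) + 1) ^ (d - 1) < (d * n) ^ (d - 1) :=
      Nat.pow_lt_pow_left hM (by omega)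
    have h4 : (d * n) ^ (d - 1) = d ^ (d - 1) * n ^ (d - 1) := mul_pow _ _ _
    have h5 : d ^ (d - 1) * n ^ (d - 1) ≤ n * n ^ (d - 1) :=
      Nat.mul_le_mul_right _ h
    have h6 : n * n ^ (d - 1) = n ^ d := by
      rw [← pow_succ']
      congr 1
      omega
    omega

end GridAux


/-- for `d ≥ 1` and `n ≥ 2` with `n ≥ d^(d-1)`, the metric dimension
of the grid `P_n^d` equals `d`. -/
theorem statement18 (d n : ℕ) (hd : 1 ≤ d) (hn : 2 ≤ n) (h : d ^ (d - 1) ≤ n) :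
    metricDim (gridGraph n d) = d := by
  have hn0 : 0 < n := by omega
  have hmem : d ∈ {k | ∃ S : Finset (Fin d → Fin n),
      IsResolvingSet (gridGraph n d) ↑S ∧ S.card = k} :=
    ⟨Finset.image (GridAux.lm n hn0) Finset.univ, GridAux.lm_resolves hd hn hn0, by
      rw [Finset.card_image_of_injective _ (GridAux.lm_inj hn hn0)]; simp⟩
  refine le_antisymm (Nat.sInf_le hmem) ?_
  refine le_csInf ⟨d, hmem⟩ ?_
  rintro k ⟨S, hS, rfl⟩
  exact GridAux.lower_bound hd hn h S hS
end
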